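/- arXiv:1703.03603 — 15 statements merged into one kernel-verified Lean document; each statement's English description precedes it below -/
import Mathlib

section
/- Let f be a size function, let S* be an optimal solution to f-DS (i.e., a nonempty subset of V maximizing the f-density w(S)/f(|S|)), and let S_DS be a nonempty subset of V maximizing the density w(S)/|S|. Then f(|S*|)/|S*| ≤ f(|S_DS|)/|S_DS|. -/
structure WGraph (V : Type) [Fintype V] [DecidableEq V] where
  E : Finset (Sym2 V)
  not_diag : ∀ e ∈ E, ¬ e.IsDiag
  w : Sym2 V → ℝ
  w_pos : ∀ e ∈ E, 0 < w e

variable {V : Type} [Fintype V] [DecidableEq V]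

def WGraph.wS (G : WGraph V) (S : Finset V) : ℝ :=
  ∑ e ∈ G.E.filter (fun e => e ∈ S.sym2), G.w e

def WGraph.deg (G : WGraph V) (S : Finset V) (v : V) : ℝ :=
  ∑ u ∈ S.filter (fun u => s(u, v) ∈ G.E), G.w s(u, v)


theorem stmt0 (G : WGraph V) (hE : G.E.Nonempty)
    (f : ℕ → ℝ) (hmono : Monotone f) (hf0 : f 0 = 0) (hfpos : ∀ x, 1 ≤ x → 0 < f x)
    (Sstar SDS : Finset V) (hS : Sstar.Nonempty) (hD : SDS.Nonempty)
    (hopt : ∀ S : Finset V, S.Nonempty → G.wS S / f S.card ≤ G.wS Sstar / f Sstar.card)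
    (hoptD : ∀ S : Finset V, S.Nonempty → G.wS S / S.card ≤ G.wS SDS / SDS.card) :
    f Sstar.card / Sstar.card ≤ f SDS.card / SDS.card := by
  obtain ⟨e, he⟩ := hE
  induction e using Sym2.ind with
  | _ u v =>
  set S0 : Finset V := {u, v} with hS0
  have hS0ne : S0.Nonempty := ⟨u, by simp [hS0]⟩
  have hmem : s(u, v) ∈ G.E.filter (fun e => e ∈ S0.sym2) := by
    simp only [Finset.mem_filter]
    exact ⟨he, by simp [hS0, Finset.mk_mem_sym2_iff]⟩
  have hw0 : 0 < G.wS S0 := by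
    apply Finset.sum_pos
    · intro e heF
      exact G.w_pos e (Finset.mem_filter.mp heF).1
    · exact ⟨_, hmem⟩
  have hfa : 0 < f Sstar.card := hfpos _ hS.card_pos
  have hfb : 0 < f SDS.card := hfpos _ hD.card_pos
  have hf2 : 0 < f S0.card := hfpos _ hS0ne.card_pos
  have ha : (0:ℝ) < Sstar.card := by exact_mod_cast hS.card_pos
  have hb : (0:ℝ) < SDS.card := by exact_mod_cast hD.card_pos
  have hc0 : (0:ℝ) < S0.card := by exact_mod_cast hS0ne.card_pos
  have hwA : 0 < G.wS Sstar := by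
    have h2 : 0 < G.wS Sstar / f Sstar.card :=
      lt_of_lt_of_le (div_pos hw0 hf2) (hopt S0 hS0ne)
    have := mul_pos h2 hfa
    rwa [div_mul_cancel₀ _ hfa.ne'] at this
  have hwD : 0 < G.wS SDS := by
    have h2 : 0 < G.wS SDS / SDS.card :=
      lt_of_lt_of_le (div_pos hw0 hc0) (hoptD S0 hS0ne)
    have := mul_pos h2 hb
    rwa [div_mul_cancel₀ _ hb.ne'] at this
  have h1 : G.wS SDS * f Sstar.card ≤ G.wS Sstar * f SDS.card :=
    (div_le_div_iff₀ hfb hfa).mp (hopt SDS hD)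
  have h2 : G.wS Sstar * SDS.card ≤ G.wS SDS * Sstar.card :=
    (div_le_div_iff₀ ha hb).mp (hoptD Sstar hS)
  rw [div_le_div_iff₀ ha hb]
  nlinarith [mul_le_mul_of_nonneg_right h1 hb.le,
    mul_le_mul_of_nonneg_right h2 hfb.le]
end

section
/- Let k be an integer with 2 ≤ k ≤ n and let e₀ ∈ E be an arbitrary edge. Define f:ℤ_{≥0}→ℝ_{≥0} by f(x) = max{ x, (w(V)/(w(e₀)/2))·(x−k) + k }. Then f is a convex size function, and a nonempty subset S ⊆ V maximizes w(S)/|S| over all nonempty subsets of size at most k if and only if S maximizes w(S)/f(|S|) over all nonempty subsets of V. -/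
variable {V : Type} [Fintype V] [DecidableEq V]

theorem stmt1 (G : WGraph V) (e₀ : Sym2 V) (he₀ : e₀ ∈ G.E)
    (k : ℕ) (hk2 : 2 ≤ k) (hkn : k ≤ Fintype.card V)
    (f : ℕ → ℝ)
    (hf : ∀ x : ℕ, f x =
      max (x : ℝ) ((G.wS Finset.univ / (G.w e₀ / 2)) * ((x : ℝ) - k) + k)) :
    (Monotone f ∧ f 0 = 0 ∧ (∀ x, 1 ≤ x → 0 < f x) ∧
      (∀ x : ℕ, 0 ≤ f x - 2 * f (x + 1) + f (x + 2))) ∧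
    (∀ S : Finset V, S.Nonempty →
      ((S.card ≤ k ∧ ∀ T : Finset V, T.Nonempty → T.card ≤ k →
          G.wS T / T.card ≤ G.wS S / S.card) ↔
        (∀ T : Finset V, T.Nonempty → G.wS T / f T.card ≤ G.wS S / f S.card))) := by
  have hw0 : 0 < G.w e₀ := G.w_pos e₀ he₀
  -- nonnegativity of wS
  have hWnn : ∀ T : Finset V, 0 ≤ G.wS T := by
    intro T
    refine Finset.sum_nonneg fun e he => ?_
    exact le_of_lt (G.w_pos e (Finset.mem_filter.1 he).1)
  have hWle : ∀ T : Finset V, G.wS T ≤ G.wS Finset.univ := by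
    intro T
    refine Finset.sum_le_sum_of_subset_of_nonneg ?_ ?_
    · intro e he
      rw [Finset.mem_filter] at he ⊢
      refine ⟨he.1, ?_⟩
      rw [Finset.mem_sym2_iff]
      intro y _
      exact Finset.mem_univ y
    · intro e he _
      exact le_of_lt (G.w_pos e (Finset.mem_filter.1 he).1)
  -- endpoints
  obtain ⟨u, v, rfl⟩ : ∃ u v, e₀ = s(u, v) := by
    induction e₀ using Sym2.ind with
    | _ x y => exact ⟨x, y, rfl⟩
  have huv : u ≠ v := by
    have := G.not_diag _ he₀
    rwa [Sym2.mk_isDiag_iff] at this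
  set S₀ : Finset V := {u, v} with hS₀def
  have hS₀card : S₀.card = 2 := Finset.card_pair huv
  have hS₀ne : S₀.Nonempty := ⟨u, by simp [hS₀def]⟩
  have hmemS₀ : s(u, v) ∈ G.E.filter (fun e => e ∈ S₀.sym2) := by
    rw [Finset.mem_filter]
    refine ⟨he₀, ?_⟩
    rw [Finset.mem_sym2_iff]
    intro y hy
    rw [Sym2.mem_iff] at hy
    rcases hy with rfl | rfl <;> simp [hS₀def]
  have hwS₀ : G.w s(u, v) ≤ G.wS S₀ := by
    refine Finset.single_le_sum (fun e he => le_of_lt (G.w_pos e (Finset.mem_filter.1 he).1)) hmemS₀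
  set W : ℝ := G.wS Finset.univ with hWdef
  have hwW : G.w s(u, v) ≤ W := le_trans hwS₀ (hWle S₀)
  have hWpos : 0 < W := lt_of_lt_of_le hw0 hwW
  set a : ℝ := W / (G.w s(u, v) / 2) with hadef
  have ha2 : 2 ≤ a := by
    rw [hadef, le_div_iff₀ (by linarith)]
    linarith
  have haW : W / a = G.w s(u, v) / 2 := by
    rw [hadef]
    field_simp
  have hk0 : (0:ℝ) ≤ (k:ℝ) := Nat.cast_nonneg k
  have hk1 : (1:ℝ) ≤ (k:ℝ) := by exact_mod_cast (by omega : 1 ≤ k)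
  -- f values
  have hfle : ∀ x : ℕ, x ≤ k → f x = (x : ℝ) := by
    intro x hx
    rw [hf]
    apply max_eq_left
    have hxk : (x:ℝ) ≤ k := Nat.cast_le.2 hx
    nlinarith [mul_nonneg (by linarith : (0:ℝ) ≤ a - 1) (by linarith : (0:ℝ) ≤ (k:ℝ) - x)]
  have hfge : ∀ x : ℕ, k ≤ x → f x = a * ((x:ℝ) - k) + k := by
    intro x hx
    rw [hf]
    apply max_eq_right
    have hxk : (k:ℝ) ≤ x := Nat.cast_le.2 hx
    nlinarith [mul_nonneg (by linarith : (0:ℝ) ≤ a - 1) (by linarith : (0:ℝ) ≤ (x:ℝ) - k)]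
  constructor
  · refine ⟨?_, ?_, ?_, ?_⟩
    · apply monotone_nat_of_le_succ
      intro x
      rw [hf, hf]
      apply max_le_max
      · push_cast; linarith
      · push_cast
        have : a * ((x:ℝ) + 1 - k) - a * ((x:ℝ) - k) = a := by ring
        linarith
    · rw [hfle 0 (by omega)]; simp
    · intro x hx
      have := hf x
      have h1 : (1:ℝ) ≤ (x:ℝ) := by exact_mod_cast hx
      rw [hf]
      exact lt_of_lt_of_le (by linarith) (le_max_left _ _)
    · intro x
      rw [hf x, hf (x+1), hf (x+2)]
      push_cast
      rcases max_choice ((x:ℝ) + 1) (a * ((x:ℝ) + 1 - k) + k) with h | h <;> rw [h]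
      · have h1 := le_max_left ((x:ℝ)) (a * ((x:ℝ) - k) + k)
        have h3 := le_max_left ((x:ℝ) + 2) (a * ((x:ℝ) + 2 - k) + k)
        linarith
      · have h1 := le_max_right ((x:ℝ)) (a * ((x:ℝ) - k) + k)
        have h3 := le_max_right ((x:ℝ) + 2) (a * ((x:ℝ) + 2 - k) + k)
        have hring : a * ((x:ℝ) - k) + a * ((x:ℝ) + 2 - k) = 2 * (a * ((x:ℝ) + 1 - k)) := by ring
        linarith
  · intro S hS
    have hScard1 : 1 ≤ S.card := Finset.card_pos.2 hS
    constructor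
    · rintro ⟨hSk, hmax⟩ T hT
      have hfS : f S.card = (S.card : ℝ) := hfle _ hSk
      have hSlb : G.w s(u,v) / 2 ≤ G.wS S / S.card := by
        have := hmax S₀ hS₀ne (by omega)
        rw [hS₀card] at this
        calc G.w s(u,v) / 2 ≤ G.wS S₀ / 2 := by linarith
        _ ≤ G.wS S / S.card := by exact_mod_cast this
      by_cases hTk : T.card ≤ k
      · rw [hfS, hfle _ hTk]
        exact hmax T hT hTk
      · push_neg at hTk
        have hkT : (k:ℝ) + 1 ≤ T.card := by exact_mod_cast hTk
        have hfT : f T.card = a * ((T.card:ℝ) - k) + k := hfge _ (by omega)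
        have hfTge : a ≤ f T.card := by
          rw [hfT]
          nlinarith [mul_nonneg (by linarith : (0:ℝ) ≤ a) (by linarith : (0:ℝ) ≤ (T.card:ℝ) - k - 1)]
        have h1 : G.wS T / f T.card ≤ W / a :=
          div_le_div₀ (le_of_lt hWpos) (hWle T) (by linarith) hfTge
        rw [hfS, haW] at *
        linarith
    · intro hmax
      have hSlb : G.w s(u,v) / 2 ≤ G.wS S / f S.card := by
        have := hmax S₀ hS₀ne
        rw [hS₀card, hfle 2 hk2] at this
        calc G.w s(u,v) / 2 ≤ G.wS S₀ / 2 := by linarith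
        _ ≤ G.wS S / f S.card := this
      have hcard : S.card ≤ k := by
        by_contra h
        push_neg at h
        have hkS : (k:ℝ) + 1 ≤ S.card := by exact_mod_cast h
        have hfS : f S.card = a * ((S.card:ℝ) - k) + k := hfge _ (by omega)
        have hfSge : a + k ≤ f S.card := by
          rw [hfS]
          nlinarith [mul_nonneg (by linarith : (0:ℝ) ≤ a) (by linarith : (0:ℝ) ≤ (S.card:ℝ) - k - 1)]
        have h1 : G.wS S / f S.card ≤ W / (a + k) :=
          div_le_div₀ (le_of_lt hWpos) (hWle S) (by linarith) hfSge
        have h2 : W / (a + k) < W / a :=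
          div_lt_div_of_pos_left hWpos (by linarith) (by linarith)
        rw [haW] at h2
        linarith
      refine ⟨hcard, ?_⟩
      intro T hT hTk
      have := hmax T hT
      rwa [hfle _ hTk, hfle _ hcard] at this
end

section
/- For integers i, j with 2 ≤ i ≤ j ≤ n, letting S_i* be a maximum weight subset of V of size i and S_j* a maximum weight subset of size j, it holds that w(S_i*)/C(i,2) ≥ w(S_j*)/C(j,2), where C(i,2)=i(i−1)/2. That is, the edge density max{w(S) : |S|=i}/C(i,2) is monotonically non-increasing in i. -/
variable {V : Type} [Fintype V] [DecidableEq V]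

lemma wS_nonneg (G : WGraph V) (S : Finset V) : 0 ≤ G.wS S := by
  apply Finset.sum_nonneg
  intro e he
  exact le_of_lt (G.w_pos e (Finset.mem_filter.mp he).1)

lemma sum_wS_erase (G : WGraph V) (S : Finset V) (h2 : 2 ≤ S.card) :
    ∑ v ∈ S, G.wS (S.erase v) = ((S.card : ℝ) - 2) * G.wS S := by
  classical
  unfold WGraph.wS
  calc ∑ v ∈ S, ∑ e ∈ G.E.filter (fun e => e ∈ (S.erase v).sym2), G.w e
      = ∑ v ∈ S, ∑ e ∈ G.E, if e ∈ (S.erase v).sym2 then G.w e else 0 := by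
        simp [Finset.sum_filter]
    _ = ∑ e ∈ G.E, ∑ v ∈ S, if e ∈ (S.erase v).sym2 then G.w e else 0 := Finset.sum_comm
    _ = ∑ e ∈ G.E, (if e ∈ S.sym2 then ((S.card : ℝ) - 2) * G.w e else 0) := by
        apply Finset.sum_congr rfl
        intro e he
        induction e using Sym2.inductionOn with
        | hf a b =>
          have hab : a ≠ b := by
            have := G.not_diag _ he
            simpa [Sym2.mk_isDiag_iff] using this
          by_cases hS : a ∈ S ∧ b ∈ S
          · rw [← Finset.sum_filter, Finset.sum_const, nsmul_eq_mul]
            have hfil : S.filter (fun v => s(a,b) ∈ (S.erase v).sym2)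
                = (S.erase a).erase b := by
              ext v
              simp only [Finset.mem_filter, Finset.mem_erase, Finset.mk_mem_sym2_iff]
              constructor
              · rintro ⟨hv, ⟨ha1, _⟩, hb1, _⟩
                exact ⟨fun h => hb1 h.symm, fun h => ha1 h.symm, hv⟩
              · rintro ⟨hvb, hva, hv⟩
                exact ⟨hv, ⟨fun h => hva h.symm, hS.1⟩, fun h => hvb h.symm, hS.2⟩
            have hbm : b ∈ S.erase a := Finset.mem_erase.mpr ⟨hab.symm, hS.2⟩
            have hcard : ((S.erase a).erase b).card = S.card - 2 := by
              rw [Finset.card_erase_of_mem hbm, Finset.card_erase_of_mem hS.1]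
              omega
            rw [hfil, hcard]
            have hmem : s(a,b) ∈ S.sym2 := Finset.mk_mem_sym2_iff.mpr hS
            rw [if_pos hmem]
            congr 1
            push_cast [Nat.cast_sub h2]
            ring
          · have hmem : s(a,b) ∉ S.sym2 := fun h => hS (Finset.mk_mem_sym2_iff.mp h)
            rw [if_neg hmem]
            apply Finset.sum_eq_zero
            intro v _
            rw [if_neg]
            intro h
            rw [Finset.mk_mem_sym2_iff] at h
            exact hS ⟨Finset.mem_of_mem_erase h.1, Finset.mem_of_mem_erase h.2⟩
    _ = ((S.card : ℝ) - 2) * ∑ e ∈ G.E.filter (fun e => e ∈ S.sym2), G.w e := by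
        rw [Finset.mul_sum]
        simp [Finset.sum_filter]

lemma key_step (G : WGraph V) (S : Finset V) (h2 : 2 ≤ S.card) :
    ∃ v ∈ S, ((S.card : ℝ) - 2) * G.wS S ≤ (S.card : ℝ) * G.wS (S.erase v) := by
  have hne : S.Nonempty := Finset.card_pos.mp (by omega)
  have hsum := sum_wS_erase G S h2
  by_contra hcon
  push_neg at hcon
  have : ∑ v ∈ S, G.wS (S.erase v) < ∑ v ∈ S, (((S.card : ℝ) - 2) * G.wS S) / (S.card : ℝ) := by
    apply Finset.sum_lt_sum_of_nonempty hne
    intro v hv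
    have hc : (0:ℝ) < (S.card : ℝ) := by positivity -- card > 0
    rw [lt_div_iff₀ hc]
    have := hcon v hv
    nlinarith [this]
  rw [hsum, Finset.sum_const, nsmul_eq_mul] at this
  have hc : (0:ℝ) < (S.card : ℝ) := by
    have : 0 < S.card := by omega
    exact_mod_cast this
  have h3 : ↑S.card * (((S.card:ℝ) - 2) * G.wS S / ↑S.card) = ((S.card:ℝ) - 2) * G.wS S := by
    field_simp
  nlinarith [this]

theorem stmt2 (G : WGraph V) (hE : G.E.Nonempty)
    (i j : ℕ) (h2i : 2 ≤ i) (hij : i ≤ j) (hjn : j ≤ Fintype.card V)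
    (Si Sj : Finset V) (hSi : Si.card = i) (hSj : Sj.card = j)
    (hSimax : ∀ S : Finset V, S.card = i → G.wS S ≤ G.wS Si)
    (hSjmax : ∀ S : Finset V, S.card = j → G.wS S ≤ G.wS Sj) :
    G.wS Sj / ((j : ℝ) * ((j : ℝ) - 1) / 2) ≤ G.wS Si / ((i : ℝ) * ((i : ℝ) - 1) / 2) := by
  classical
  -- existence of maxima at every size k ≤ card V
  have hmax : ∀ k : ℕ, k ≤ Fintype.card V →
      ∃ M : Finset V, M.card = k ∧ ∀ S : Finset V, S.card = k → G.wS S ≤ G.wS M := by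
    intro k hk
    have hne : ((Finset.univ : Finset V).powersetCard k).Nonempty := by
      rw [Finset.powersetCard_nonempty]
      simpa using hk
    obtain ⟨M, hM, hMmax⟩ := Finset.exists_max_image _ G.wS hne
    refine ⟨M, ?_, ?_⟩
    · exact (Finset.mem_powersetCard.mp hM).2
    · intro S hS
      exact hMmax S (Finset.mem_powersetCard.mpr ⟨Finset.subset_univ S, hS⟩)
  -- main induction
  have main : ∀ k : ℕ, i ≤ k → k ≤ Fintype.card V →
      ∀ M : Finset V, M.card = k → (∀ S : Finset V, S.card = k → G.wS S ≤ G.wS M) →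
      G.wS M / ((k : ℝ) * ((k : ℝ) - 1) / 2) ≤ G.wS Si / ((i : ℝ) * ((i : ℝ) - 1) / 2) := by
    intro k hik
    induction k, hik using Nat.le_induction with
    | base =>
      intro _ M hM hMmax
      have h1 : G.wS Si ≤ G.wS M := hMmax Si hSi
      have h2 : G.wS M ≤ G.wS Si := hSimax M hM
      rw [le_antisymm h1 h2]
    | succ k hik IH =>
      intro hk1 M hM hMmax
      have hk2 : 2 ≤ k := le_trans h2i hik
      have hMc : 2 ≤ M.card := by omega
      obtain ⟨v, hv, hkey⟩ := key_step G M hMc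
      obtain ⟨M', hM'c, hM'max⟩ := hmax k (by omega)
      have herase : (M.erase v).card = k := by
        rw [Finset.card_erase_of_mem hv, hM]
        omega
      have h1 : G.wS (M.erase v) ≤ G.wS M' := hM'max _ herase
      have IH' := IH (by omega) M' hM'c hM'max
      -- combine: (k-1) * wS M ≤ (k+1) * wS M'
      have hcomb : ((k : ℝ) - 1) * G.wS M ≤ ((k : ℝ) + 1) * G.wS M' := by
        rw [hM] at hkey
        push_cast at hkey
        nlinarith [hkey, h1]
      -- density step: wS M / C(k+1,2) ≤ wS M' / C(k,2)
      have hkR : (2:ℝ) ≤ (k:ℝ) := by exact_mod_cast hk2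
      have hd1 : (0:ℝ) < (k:ℝ) * ((k:ℝ) - 1) / 2 := by nlinarith
      have hd2 : (0:ℝ) < ((k:ℝ)+1) * (((k:ℝ)+1) - 1) / 2 := by nlinarith
      have hstep : G.wS M / (((k:ℝ)+1) * (((k:ℝ)+1) - 1) / 2)
          ≤ G.wS M' / ((k:ℝ) * ((k:ℝ) - 1) / 2) := by
        rw [div_le_div_iff₀ hd2 hd1] at *
        nlinarith [hcomb, wS_nonneg G M, wS_nonneg G M']
      push_cast
      exact le_trans hstep IH'
  exact main j hij hjn Sj hSj hSjmax
end

section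
/- Let f be a convex size function, let S* be an optimal solution to f-DS, and let k ≥ 2 be an integer with |S*| ≥ k. Let S_k* be a maximum weight subset of V of size k. Then w(S*)/f(|S*|) ≤ ( (2·f(k)/k²) / (f(|S*|)/|S*|²) ) · ( w(S_k*)/f(k) ). -/
variable {V : Type} [Fintype V] [DecidableEq V]

lemma count_pairs (S : Finset V) (k : ℕ) (hk : 2 ≤ k)
    (a b : V) (hab : a ≠ b) (ha : a ∈ S) (hb : b ∈ S) :
    ((S.powersetCard k).filter (fun T => a ∈ T ∧ b ∈ T)).card
      = (S.card - 2).choose (k - 2) := by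
  have hsub : ({a, b} : Finset V) ⊆ S := by
    intro x hx
    simp only [Finset.mem_insert, Finset.mem_singleton] at hx
    rcases hx with rfl | rfl <;> assumption
  have hcard2 : ({a, b} : Finset V).card = 2 := by
    rw [Finset.card_insert_of_notMem (by simp [hab]), Finset.card_singleton]
  have hc : ((S \ {a, b}).powersetCard (k - 2)).card = (S.card - 2).choose (k - 2) := by
    rw [Finset.card_powersetCard, Finset.card_sdiff_of_subset hsub, hcard2]
  rw [← hc]
  refine Finset.card_bij' (fun T _ => T \ {a, b}) (fun T' _ => T' ∪ {a, b}) ?_ ?_ ?_ ?_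
  · intro T hT
    simp only [Finset.mem_filter, Finset.mem_powersetCard] at hT
    obtain ⟨⟨hTS, hTk⟩, haT, hbT⟩ := hT
    have habT : ({a, b} : Finset V) ⊆ T := by
      intro x hx
      simp only [Finset.mem_insert, Finset.mem_singleton] at hx
      rcases hx with rfl | rfl <;> assumption
    rw [Finset.mem_powersetCard]
    exact ⟨Finset.sdiff_subset_sdiff hTS (le_refl _),
      by rw [Finset.card_sdiff_of_subset habT, hTk, hcard2]⟩
  · intro T' hT'
    rw [Finset.mem_powersetCard] at hT'
    obtain ⟨hT'S, hT'c⟩ := hT'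
    have hdisj : Disjoint T' ({a, b} : Finset V) := by
      refine Finset.disjoint_left.mpr fun x hx hx2 => ?_
      have := hT'S hx
      rw [Finset.mem_sdiff] at this
      exact this.2 hx2
    refine Finset.mem_filter.mpr ⟨Finset.mem_powersetCard.mpr ⟨?_, ?_⟩, ?_, ?_⟩
    · exact Finset.union_subset (hT'S.trans Finset.sdiff_subset) hsub
    · rw [Finset.card_union_of_disjoint hdisj, hT'c, hcard2]
      omega
    · exact Finset.mem_union_right _ (by simp)
    · exact Finset.mem_union_right _ (by simp)
  · intro T hT
    simp only [Finset.mem_filter, Finset.mem_powersetCard] at hT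
    obtain ⟨⟨hTS, hTk⟩, haT, hbT⟩ := hT
    have habT : ({a, b} : Finset V) ⊆ T := by
      intro x hx
      simp only [Finset.mem_insert, Finset.mem_singleton] at hx
      rcases hx with rfl | rfl <;> assumption
    exact Finset.sdiff_union_of_subset habT
  · intro T' hT'
    rw [Finset.mem_powersetCard] at hT'
    have hdisj : Disjoint T' ({a, b} : Finset V) := by
      refine Finset.disjoint_left.mpr fun x hx hx2 => ?_
      have := hT'.1 hx
      rw [Finset.mem_sdiff] at this
      exact this.2 hx2
    show (T' ∪ {a, b}) \ {a, b} = T'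
    rw [Finset.union_sdiff_right, Finset.sdiff_eq_self_of_disjoint hdisj]

lemma choose_ineq (k s : ℕ) (hk : 2 ≤ k) (hks : k ≤ s) :
    (s.choose k) * k ^ 2 ≤ 2 * s ^ 2 * (s - 2).choose (k - 2) := by
  obtain ⟨j, rfl⟩ : ∃ j, k = j + 2 := ⟨k - 2, by omega⟩
  obtain ⟨m, rfl⟩ : ∃ m, s = m + 2 := ⟨s - 2, by omega⟩
  have hjm : j ≤ m := by omega
  simp only [Nat.add_sub_cancel]
  have h1 := Nat.add_one_mul_choose_eq (m + 1) (j + 1)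
  have h2 := Nat.add_one_mul_choose_eq m j
  -- h1 : (m+2) * (m+1).choose (j+1) = (m+2).choose (j+2) * (j+2)
  -- h2 : (m+1) * m.choose j = (m+1).choose (j+1) * (j+1)
  -- identity: (m+2).choose (j+2) * (j+2) * (j+1) = (m+2)*(m+1)* m.choose j
  have hid : (m + 2).choose (j + 2) * ((j + 2) * (j + 1))
      = (m + 2) * (m + 1) * m.choose j := by
    calc (m + 2).choose (j + 2) * ((j + 2) * (j + 1))
        = ((m + 2).choose (j + 2) * (j + 2)) * (j + 1) := by ring
      _ = ((m + 2) * (m + 1).choose (j + 1)) * (j + 1) := by rw [h1]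
      _ = (m + 2) * ((m + 1).choose (j + 1) * (j + 1)) := by ring
      _ = (m + 2) * ((m + 1) * m.choose j) := by rw [h2]
      _ = (m + 2) * (m + 1) * m.choose j := by ring
  have step : (j + 2) * ((m + 2) * (m + 1)) ≤ (2 * (m + 2) ^ 2) * (j + 1) := by nlinarith
  have hmain : (m + 2).choose (j + 2) * (j + 2) ^ 2 * (j + 1)
      ≤ 2 * (m + 2) ^ 2 * m.choose j * (j + 1) := by
    calc (m + 2).choose (j + 2) * (j + 2) ^ 2 * (j + 1)
        = ((m + 2).choose (j + 2) * ((j + 2) * (j + 1))) * (j + 2) := by ring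
      _ = ((m + 2) * (m + 1) * m.choose j) * (j + 2) := by rw [hid]
      _ = ((j + 2) * ((m + 2) * (m + 1))) * m.choose j := by ring
      _ ≤ ((2 * (m + 2) ^ 2) * (j + 1)) * m.choose j := Nat.mul_le_mul_right _ step
      _ = 2 * (m + 2) ^ 2 * m.choose j * (j + 1) := by ring
  exact Nat.le_of_mul_le_mul_right hmain (by omega)

theorem stmt3 (G : WGraph V) (hE : G.E.Nonempty)
    (f : ℕ → ℝ) (hmono : Monotone f) (hf0 : f 0 = 0) (hfpos : ∀ x, 1 ≤ x → 0 < f x)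
    (hconv : ∀ x : ℕ, 0 ≤ f x - 2 * f (x + 1) + f (x + 2))
    (Sstar : Finset V) (hne : Sstar.Nonempty)
    (hopt : ∀ S : Finset V, S.Nonempty → G.wS S / f S.card ≤ G.wS Sstar / f Sstar.card)
    (k : ℕ) (hk2 : 2 ≤ k) (hks : k ≤ Sstar.card)
    (Sk : Finset V) (hSk : Sk.card = k)
    (hSkmax : ∀ S : Finset V, S.card = k → G.wS S ≤ G.wS Sk) :
    G.wS Sstar / f Sstar.card ≤
      ((2 * f k / (k : ℝ) ^ 2) / (f Sstar.card / (Sstar.card : ℝ) ^ 2)) *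
        (G.wS Sk / f k) := by
  set s := Sstar.card with hs
  -- averaging identity
  have hsum : ∑ T ∈ Sstar.powersetCard k, G.wS T
      = ((s - 2).choose (k - 2) : ℝ) * G.wS Sstar := by
    unfold WGraph.wS
    rw [Finset.mul_sum]
    simp_rw [Finset.sum_filter]
    rw [Finset.sum_comm]
    apply Finset.sum_congr rfl
    intro e he
    induction e using Sym2.inductionOn with
    | hf a b =>
      have hab : a ≠ b := fun h => G.not_diag _ he (by simp [h])
      simp only [Finset.mk_mem_sym2_iff]
      by_cases hmem : a ∈ Sstar ∧ b ∈ Sstar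
      · rw [if_pos hmem, ← Finset.sum_filter, Finset.sum_const,
          count_pairs Sstar k hk2 a b hab hmem.1 hmem.2, nsmul_eq_mul]
      · rw [if_neg hmem]
        apply Finset.sum_eq_zero
        intro T hT
        rw [Finset.mem_powersetCard] at hT
        rw [if_neg]
        intro hcon
        exact hmem ⟨hT.1 hcon.1, hT.1 hcon.2⟩
  have hbound : ∑ T ∈ Sstar.powersetCard k, G.wS T ≤ (s.choose k : ℝ) * G.wS Sk := by
    have := Finset.sum_le_card_nsmul (Sstar.powersetCard k) G.wS (G.wS Sk)
      (fun T hT => hSkmax T (Finset.mem_powersetCard.mp hT).2)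
    rwa [Finset.card_powersetCard, nsmul_eq_mul] at this
  have hBnn : 0 ≤ G.wS Sk := Finset.sum_nonneg fun e he =>
    le_of_lt (G.w_pos e (Finset.mem_filter.mp he).1)
  have hC2pos : (0 : ℝ) < ((s - 2).choose (k - 2) : ℝ) := by
    exact_mod_cast Nat.choose_pos (by omega)
  have hchoose : ((s.choose k : ℝ)) * (k : ℝ) ^ 2
      ≤ 2 * (s : ℝ) ^ 2 * ((s - 2).choose (k - 2) : ℝ) := by
    exact_mod_cast choose_ineq k s hk2 hks
  have hkey : G.wS Sstar * (k : ℝ) ^ 2 ≤ 2 * (s : ℝ) ^ 2 * G.wS Sk := by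
    have h1 : ((s - 2).choose (k - 2) : ℝ) * G.wS Sstar ≤ (s.choose k : ℝ) * G.wS Sk := by
      rw [← hsum]; exact hbound
    nlinarith [mul_le_mul_of_nonneg_right hchoose hBnn, sq_nonneg (k : ℝ)]
  have hks1 : (1 : ℕ) ≤ s := by omega
  have hfs : 0 < f s := hfpos s hks1
  have hfk : 0 < f k := hfpos k (by omega)
  have hkpos : (0 : ℝ) < (k : ℝ) := by exact_mod_cast (by omega : 0 < k)
  have hspos : (0 : ℝ) < (s : ℝ) := by exact_mod_cast (by omega : 0 < s)
  have hRHS : ((2 * f k / (k : ℝ) ^ 2) / (f s / (s : ℝ) ^ 2)) * (G.wS Sk / f k)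
      = (2 * (s : ℝ) ^ 2 * G.wS Sk) / ((k : ℝ) ^ 2 * f s) := by
    field_simp
  rw [hRHS, div_le_div_iff₀ hfs (by positivity)]
  nlinarith [mul_le_mul_of_nonneg_right hkey (le_of_lt hfs)]
end

section
/- Let f be a convex size function and let S* be an optimal solution to f-DS. Then f(2)/2 ≥ f(|S*|)/|S*|². In particular, if f grows super-quadratically in the sense that f(x)/x² is unbounded, then optimal solutions to f-DS have bounded size. -/
variable {V : Type} [Fintype V] [DecidableEq V]

def WGraph.IsOpt {V : Type} [Fintype V] [DecidableEq V]
    (G : WGraph V) (f : ℕ → ℝ) (S : Finset V) : Prop :=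
  S.Nonempty ∧ ∀ T : Finset V, T.Nonempty → G.wS T / f T.card ≤ G.wS S / f S.card

lemma stmt4_key (f : ℕ → ℝ) (hfpos : ∀ x, 1 ≤ x → 0 < f x)
    {V : Type} [Fintype V] [DecidableEq V]
    (G : WGraph V) (hE : G.E.Nonempty)
    (S : Finset V) (hopt : G.IsOpt f S) :
    f S.card / (S.card : ℝ) ^ 2 ≤ f 2 / 2 := by
  obtain ⟨hSne, hopt2⟩ := hopt
  obtain ⟨e, he⟩ := hE
  induction e using Sym2.ind with
  | _ u v =>
  have huv : u ≠ v := fun h => G.not_diag _ he (by simp [h])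
  -- the pair {u,v} has positive weight
  have hwT : 0 < G.wS {u, v} := by
    apply Finset.sum_pos
    · intro x hx
      exact G.w_pos x (Finset.mem_filter.mp hx).1
    · exact ⟨s(u, v), Finset.mem_filter.mpr ⟨he, by simp⟩⟩
  have hcard2 : ({u, v} : Finset V).card = 2 := Finset.card_pair huv
  have hS1 : 1 ≤ S.card := Finset.one_le_card.mpr hSne
  have hfS : 0 < f S.card := hfpos _ hS1
  have hf2 : 0 < f 2 := hfpos 2 (by norm_num)
  have hT := hopt2 {u, v} ⟨u, by simp⟩
  rw [hcard2] at hT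
  have hwS : 0 < G.wS S := by
    by_contra h
    push_neg at h
    have h1 : G.wS S / f S.card ≤ 0 := div_nonpos_of_nonpos_of_nonneg h hfS.le
    have h2 : 0 < G.wS {u, v} / f 2 := div_pos hwT hf2
    linarith
  -- S.card ≥ 2
  have hs2 : 2 ≤ S.card := by
    by_contra h
    push_neg at h
    have hc : S.card = 1 := by omega
    obtain ⟨x, hx⟩ := Finset.card_eq_one.mp hc
    have : G.wS S = 0 := by
      unfold WGraph.wS
      apply Finset.sum_eq_zero
      intro e' he'
      exfalso
      have h1 := (Finset.mem_filter.mp he').1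
      have h2 := (Finset.mem_filter.mp he').2
      induction e' using Sym2.ind with
      | _ a b =>
      rw [hx] at h2
      rw [Finset.mk_mem_sym2_iff] at h2
      simp at h2
      exact G.not_diag _ h1 (by simp [h2.1, h2.2])
    linarith
  -- sum over pairs equals wS S
  have hsum : ∑ P ∈ S.powersetCard 2, G.wS P = G.wS S := by
    unfold WGraph.wS
    calc ∑ P ∈ S.powersetCard 2, ∑ e ∈ G.E.filter (fun e => e ∈ P.sym2), G.w e
        = ∑ P ∈ S.powersetCard 2, ∑ e ∈ G.E, if e ∈ P.sym2 then G.w e else 0 := by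
          simp [Finset.sum_filter]
      _ = ∑ e ∈ G.E, ∑ P ∈ S.powersetCard 2, if e ∈ P.sym2 then G.w e else 0 :=
          Finset.sum_comm
      _ = ∑ e ∈ G.E, if e ∈ S.sym2 then G.w e else 0 := by
          apply Finset.sum_congr rfl
          intro e he'
          induction e using Sym2.ind with
          | _ a b =>
          have hab : a ≠ b := fun h => G.not_diag _ he' (by simp [h])
          rw [← Finset.sum_filter]
          by_cases hmem : s(a, b) ∈ S.sym2
          · have habS : a ∈ S ∧ b ∈ S := Finset.mk_mem_sym2_iff.mp hmem
            have hfilt : (S.powersetCard 2).filter (fun P => s(a, b) ∈ P.sym2)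
                = {({a, b} : Finset V)} := by
              ext P
              simp only [Finset.mem_filter, Finset.mem_powersetCard,
                Finset.mem_singleton, Finset.mk_mem_sym2_iff]
              constructor
              · rintro ⟨⟨hPS, hP2⟩, ha, hb⟩
                have hsub : ({a, b} : Finset V) ⊆ P := by
                  intro x hx
                  simp at hx
                  rcases hx with rfl | rfl <;> assumption
                exact (Finset.eq_of_subset_of_card_le hsub
                  (by rw [hP2, Finset.card_pair hab])).symm
              · rintro rfl
                refine ⟨⟨?_, Finset.card_pair hab⟩, by simp, by simp⟩
                intro x hx
                simp at hx
                rcases hx with rfl | rfl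
                exacts [habS.1, habS.2]
            rw [hfilt, Finset.sum_singleton, if_pos hmem]
          · rw [if_neg hmem]
            apply Finset.sum_eq_zero
            intro P hP
            exfalso
            have h1 := (Finset.mem_filter.mp hP).2
            have h2 := (Finset.mem_powersetCard.mp (Finset.mem_filter.mp hP).1).1
            rw [Finset.mk_mem_sym2_iff] at h1
            exact hmem (Finset.mk_mem_sym2_iff.mpr ⟨h2 h1.1, h2 h1.2⟩)
      _ = ∑ e ∈ G.E.filter (fun e => e ∈ S.sym2), G.w e := (Finset.sum_filter _ _).symm
  -- averaging
  set N : ℕ := S.card.choose 2 with hN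
  have hNcard : (S.powersetCard 2).card = N := Finset.card_powersetCard 2 S
  have hNpos : 0 < N := Nat.choose_pos hs2
  have hne : (S.powersetCard 2).Nonempty := Finset.card_pos.mp (by omega)
  obtain ⟨P, hPmem, hPle⟩ : ∃ P ∈ S.powersetCard 2, G.wS S / N ≤ G.wS P := by
    apply Finset.exists_le_of_sum_le hne
    rw [Finset.sum_const, hNcard, hsum, nsmul_eq_mul]
    rw [mul_div_cancel₀]
    positivity
  have hP2 : P.card = 2 := (Finset.mem_powersetCard.mp hPmem).2
  have hPne : P.Nonempty := Finset.card_pos.mp (by omega)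
  have hPopt := hopt2 P hPne
  rw [hP2] at hPopt
  -- f S.card ≤ N * f 2
  have hNR : (0:ℝ) < N := by exact_mod_cast hNpos
  have hkey : f S.card ≤ N * f 2 := by
    have h1 : G.wS S / N / f 2 ≤ G.wS P / f 2 := (div_le_div_iff_of_pos_right hf2).mpr hPle
    rw [div_div] at h1
    have h2 : G.wS S / (↑N * f 2) ≤ G.wS S / f S.card := le_trans h1 hPopt
    exact (div_le_div_iff_of_pos_left hwS (by positivity) hfS).mp h2
  have hNs : 2 * N = S.card * (S.card - 1) := by
    rw [hN, Nat.choose_two_right]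
    apply Nat.mul_div_cancel'
    obtain ⟨k, hk⟩ : ∃ k, S.card = k + 1 := ⟨S.card - 1, by omega⟩
    rw [hk]
    simpa [mul_comm] using (Nat.even_mul_succ_self k).two_dvd
  have hNle : 2 * N ≤ S.card ^ 2 := by
    rw [hNs, pow_two]
    exact Nat.mul_le_mul_left _ (Nat.sub_le _ _)
  have hcast : 2 * (N : ℝ) ≤ (S.card : ℝ) ^ 2 := by exact_mod_cast hNle
  have hspos : (0:ℝ) < (S.card : ℝ) ^ 2 := by positivity
  rw [div_le_div_iff₀ hspos (by norm_num : (0:ℝ) < 2)]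
  nlinarith [hf2.le, hkey, hcast]


theorem stmt4 (f : ℕ → ℝ) (hmono : Monotone f) (hf0 : f 0 = 0) (hfpos : ∀ x, 1 ≤ x → 0 < f x)
    (hconv : ∀ x : ℕ, 0 ≤ f x - 2 * f (x + 1) + f (x + 2))
    (G : WGraph V) (hE : G.E.Nonempty)
    (Sstar : Finset V) (hopt : G.IsOpt f Sstar) :
    f Sstar.card / (Sstar.card : ℝ) ^ 2 ≤ f 2 / 2 ∧
    (Filter.Tendsto (fun x : ℕ => f x / (x : ℝ) ^ 2) Filter.atTop Filter.atTop →
      ∃ B : ℕ, ∀ (m : ℕ) (G' : WGraph (Fin m)), G'.E.Nonempty →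
        ∀ S : Finset (Fin m), G'.IsOpt f S → S.card ≤ B) := by
  constructor
  · exact stmt4_key f hfpos G hE Sstar hopt
  · intro htend
    obtain ⟨B, hB⟩ := (Filter.eventually_atTop).mp (htend.eventually_gt_atTop (f 2 / 2))
    refine ⟨B, fun m G' hE' S hoptS => ?_⟩
    by_contra h
    push_neg at h
    have h1 := hB S.card (le_of_lt h)
    have h2 := stmt4_key f hfpos G' hE' S hoptS
    linarith
end

section
/- Let f be a size function and let S* be an optimal solution to f-DS with |S*| ≥ 2. Then for every vertex v ∈ S*, the weighted degree of v in the induced subgraph G[S*] satisfies d_{S*}(v) ≥ (f(|S*|) − f(|S*|−1)) · w(S*)/f(|S*|). -/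
variable {V : Type} [Fintype V] [DecidableEq V]

lemma wS_erase (G : WGraph V) (S : Finset V) (v : V) (hv : v ∈ S) :
    G.wS S = G.wS (S.erase v) + G.deg S v := by
  classical
  unfold WGraph.wS WGraph.deg
  have hsplit : G.E.filter (fun e => e ∈ S.sym2) =
      (G.E.filter (fun e => e ∈ (S.erase v).sym2)) ∪
      (G.E.filter (fun e => e ∈ S.sym2 ∧ v ∈ e)) := by
    ext e
    simp only [Finset.mem_filter, Finset.mem_union, Finset.mem_sym2_iff, Finset.mem_erase]
    constructor
    · rintro ⟨he, hS⟩
      by_cases hve : v ∈ e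
      · exact Or.inr ⟨he, hS, hve⟩
      · exact Or.inl ⟨he, fun a ha => ⟨fun h => hve (h ▸ ha), hS a ha⟩⟩
    · rintro (⟨he, hS⟩ | ⟨he, hS, _⟩)
      · exact ⟨he, fun a ha => (hS a ha).2⟩
      · exact ⟨he, hS⟩
  have hdisj : Disjoint (G.E.filter (fun e => e ∈ (S.erase v).sym2))
      (G.E.filter (fun e => e ∈ S.sym2 ∧ v ∈ e)) := by
    rw [Finset.disjoint_left]
    intro e h1 h2
    simp only [Finset.mem_filter, Finset.mem_sym2_iff, Finset.mem_erase] at h1 h2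
    exact (h1.2 v h2.2.2).1 rfl
  rw [hsplit, Finset.sum_union hdisj]
  congr 1
  refine (Finset.sum_bij (fun u _ => s(u, v)) ?_ ?_ ?_ ?_).symm
  · intro u hu
    simp only [Finset.mem_filter] at hu ⊢
    refine ⟨hu.2, ?_, ?_⟩
    · rw [Finset.mk_mem_sym2_iff]; exact ⟨hu.1, hv⟩
    · simp
  · intro a ha b hb h
    exact Sym2.congr_left.mp h
  · intro e he
    simp only [Finset.mem_filter] at he
    obtain ⟨he, hmem, hve⟩ := he
    induction e using Sym2.inductionOn with
    | hf a b =>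
      rw [Sym2.mem_iff] at hve
      rw [Finset.mk_mem_sym2_iff] at hmem
      rcases hve with h | h
      · refine ⟨b, Finset.mem_filter.mpr ⟨hmem.2, ?_⟩, ?_⟩
        · rwa [show s(b, v) = s(a, b) by rw [h, Sym2.eq_swap]]
        · simp [h, Sym2.eq_swap]
      · exact ⟨a, Finset.mem_filter.mpr ⟨hmem.1, by subst h; exact he⟩, by subst h; rfl⟩
  · intro u hu; rfl

theorem stmt5 (G : WGraph V) (hE : G.E.Nonempty)
    (f : ℕ → ℝ) (hmono : Monotone f) (hf0 : f 0 = 0) (hfpos : ∀ x, 1 ≤ x → 0 < f x)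
    (Sstar : Finset V) (hne : Sstar.Nonempty)
    (hopt : ∀ S : Finset V, S.Nonempty → G.wS S / f S.card ≤ G.wS Sstar / f Sstar.card)
    (hcard : 2 ≤ Sstar.card) (v : V) (hv : v ∈ Sstar) :
    (f Sstar.card - f (Sstar.card - 1)) * (G.wS Sstar / f Sstar.card) ≤ G.deg Sstar v := by
  classical
  set n := Sstar.card with hn
  set ρ := G.wS Sstar / f n with hρ
  have hn1 : 1 ≤ n - 1 := by omega
  have hcard' : (Sstar.erase v).card = n - 1 := by
    rw [Finset.card_erase_of_mem hv]
  have hne' : (Sstar.erase v).Nonempty := by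
    rw [← Finset.card_pos, hcard']; omega
  have hfn : 0 < f n := hfpos n (by omega)
  have hfn1 : 0 < f (n - 1) := hfpos _ hn1
  have h1 : G.wS (Sstar.erase v) ≤ f (n - 1) * ρ := by
    have := hopt (Sstar.erase v) hne'
    rw [hcard'] at this
    calc G.wS (Sstar.erase v) = f (n - 1) * (G.wS (Sstar.erase v) / f (n - 1)) := by
          field_simp
      _ ≤ f (n - 1) * ρ := by
          exact mul_le_mul_of_nonneg_left this hfn1.le
  have h2 : G.wS Sstar = f n * ρ := by
    rw [hρ]; field_simp
  have h3 := wS_erase G Sstar v hv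
  nlinarith [h1, h2, h3]
end

section
/- Let f be a convex size function, let S* be an optimal solution to f-DS, and let S_n, S_{n−1}, …, S_1 be the subsets produced by the greedy peeling on G. Then (f(|S*|) − f(|S*|−1)) · w(S*)/f(|S*|) ≤ (2·f(n)/n) · max_{1≤i≤n} w(S_i)/f(i). Equivalently, the greedy peeling returns a subset S with w(S*)/f(|S*|) ≤ ( (2f(n)/n) / (f(|S*|)−f(|S*|−1)) ) · w(S)/f(|S|). -/
variable {V : Type} [Fintype V] [DecidableEq V]

namespace WGraph
variable (G : WGraph V)

lemma wS_nonneg (S : Finset V) : 0 ≤ G.wS S :=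
  Finset.sum_nonneg fun e he => (G.w_pos e (Finset.mem_filter.mp he).1).le

lemma deg_nonneg (S : Finset V) (v : V) : 0 ≤ G.deg S v :=
  Finset.sum_nonneg fun u hu => (G.w_pos _ (Finset.mem_filter.mp hu).2).le

lemma deg_mono {S T : Finset V} (h : S ⊆ T) (v : V) : G.deg S v ≤ G.deg T v :=
  Finset.sum_le_sum_of_subset_of_nonneg (Finset.filter_subset_filter _ h)
    (fun e he _ => (G.w_pos _ (Finset.mem_filter.mp he).2).le)

lemma deg_eq_sum_edges (S : Finset V) (v : V) (hv : v ∈ S) :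
    G.deg S v = ∑ e ∈ (G.E.filter (fun e => e ∈ S.sym2)).filter (fun e => v ∈ e), G.w e := by
  refine Finset.sum_bij (fun u _ => s(u, v)) ?_ ?_ ?_ ?_
  · intro u hu
    obtain ⟨huS, huE⟩ := Finset.mem_filter.mp hu
    simp only [Finset.mem_filter, Finset.mk_mem_sym2_iff, Sym2.mem_iff]
    exact ⟨⟨huE, huS, hv⟩, by simp⟩
  · intro a ha b hb h
    rw [Sym2.eq_iff] at h
    rcases h with ⟨h1, _⟩ | ⟨h1, h2⟩
    · exact h1
    · rw [h1, ← h2]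
  · intro e he
    simp only [Finset.mem_filter] at he
    obtain ⟨⟨heE, heS⟩, hve⟩ := he
    refine ⟨Sym2.Mem.other hve, ?_, ?_⟩
    · simp only [Finset.mem_filter]
      constructor
      · exact Finset.mem_sym2_iff.mp heS _ (Sym2.other_mem hve)
      · show s(Sym2.Mem.other hve, v) ∈ G.E
        rw [Sym2.eq_swap, Sym2.other_spec hve]; exact heE
    · show s(Sym2.Mem.other hve, v) = e
      rw [Sym2.eq_swap, Sym2.other_spec hve]
  · intro a _; rfl

lemma mem_erase_sym2 (S : Finset V) (v : V) (e : Sym2 V) :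
    e ∈ (S.erase v).sym2 ↔ e ∈ S.sym2 ∧ ¬ v ∈ e := by
  induction e using Sym2.ind with
  | _ a b =>
    simp only [Finset.mk_mem_sym2_iff, Finset.mem_erase, Sym2.mem_iff]
    constructor
    · rintro ⟨⟨ha1, ha2⟩, hb1, hb2⟩
      exact ⟨⟨ha2, hb2⟩, by rintro (rfl | rfl) <;> simp_all⟩
    · rintro ⟨⟨ha, hb⟩, hv⟩
      push_neg at hv
      exact ⟨⟨Ne.symm hv.1, ha⟩, Ne.symm hv.2, hb⟩

lemma wS_erase (S : Finset V) (v : V) (hv : v ∈ S) :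
    G.wS S = G.wS (S.erase v) + G.deg S v := by
  rw [wS, wS, deg_eq_sum_edges G S v hv]
  rw [← Finset.sum_filter_add_sum_filter_not (G.E.filter (fun e => e ∈ S.sym2))
    (fun e => v ∈ e) G.w]
  rw [add_comm]
  congr 1
  rw [Finset.filter_filter]
  apply Finset.sum_congr _ (fun _ _ => rfl)
  apply Finset.filter_congr
  intro e _
  simp only [mem_erase_sym2]

lemma deg_insert (S : Finset V) (a v : V) (ha : a ∉ S) :
    G.deg (insert a S) v = G.deg S v + (if s(a,v) ∈ G.E then G.w s(a,v) else 0) := by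
  rw [deg, deg, Finset.filter_insert]
  split
  · rw [Finset.sum_insert (fun h => ha (Finset.mem_filter.mp h).1), add_comm]
  · rw [add_zero]

lemma diag_not_mem (a : V) : s(a, a) ∉ G.E := fun h => G.not_diag _ h (Sym2.isDiag_iff_proj_eq |>.mpr rfl)

lemma handshake (S : Finset V) : ∑ v ∈ S, G.deg S v = 2 * G.wS S := by
  induction S using Finset.induction_on with
  | empty => simp [wS, deg]
  | @insert a S ha ih =>
    have hwins : G.wS (insert a S) = G.wS S + G.deg S a := by
      rw [wS_erase G (insert a S) a (Finset.mem_insert_self a S), Finset.erase_insert ha,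
        deg_insert G S a a ha, if_neg (G.diag_not_mem a)]
      ring
    have hsum : ∑ v ∈ S, (if s(a,v) ∈ G.E then G.w s(a,v) else 0) = G.deg S a := by
      rw [deg, Finset.sum_filter]
      exact Finset.sum_congr rfl (fun u _ => by rw [Sym2.eq_swap])
    rw [Finset.sum_insert ha, deg_insert G S a a ha, if_neg (G.diag_not_mem a)]
    have : ∑ v ∈ S, G.deg (insert a S) v = 2 * G.wS S + G.deg S a := by
      calc ∑ v ∈ S, G.deg (insert a S) v
          = ∑ v ∈ S, (G.deg S v + (if s(a,v) ∈ G.E then G.w s(a,v) else 0)) :=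
            Finset.sum_congr rfl (fun v _ => G.deg_insert S a v ha)
        _ = 2 * G.wS S + G.deg S a := by rw [Finset.sum_add_distrib, ih, hsum]
    rw [this, hwins]
    ring

end WGraph

lemma density_mono (f : ℕ → ℝ) (hf0 : f 0 = 0)
    (hconv : ∀ x : ℕ, 0 ≤ f x - 2 * f (x + 1) + f (x + 2))
    {i n : ℕ} (hi : 1 ≤ i) (hin : i ≤ n) : (n : ℝ) * f i ≤ (i : ℝ) * f n := by
  have hd : Monotone (fun x => f (x + 1) - f x) :=
    monotone_nat_of_le_succ (fun x => by have := hconv x; linarith)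
  have hfi : f i = ∑ j ∈ Finset.range i, (f (j + 1) - f j) := by
    rw [Finset.sum_range_sub, hf0, sub_zero]
  have hA : f i ≤ (i : ℝ) * (f (i + 1) - f i) := by
    calc f i = ∑ j ∈ Finset.range i, (f (j + 1) - f j) := hfi
      _
        ≤ (Finset.range i).card • (f (i + 1) - f i) :=
          Finset.sum_le_card_nsmul _ _ _ (fun j hj => hd (by
            have := Finset.mem_range.mp hj; omega))
      _ = (i : ℝ) * (f (i + 1) - f i) := by rw [Finset.card_range, nsmul_eq_mul]
  have hB : ((n : ℝ) - i) * (f (i + 1) - f i) ≤ f n - f i := by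
    have h1 : f n - f i = ∑ j ∈ Finset.Ico i n, (f (j + 1) - f j) := by
      rw [Finset.sum_Ico_eq_sub _ hin, Finset.sum_range_sub, Finset.sum_range_sub, hf0]
      ring
    rw [h1]
    calc ((n : ℝ) - i) * (f (i + 1) - f i)
        = (Finset.Ico i n).card • (f (i + 1) - f i) := by
          rw [Nat.card_Ico, nsmul_eq_mul, Nat.cast_sub hin]
      _ ≤ ∑ j ∈ Finset.Ico i n, (f (j + 1) - f j) :=
          Finset.card_nsmul_le_sum _ _ _ (fun j hj => hd (Finset.mem_Ico.mp hj).1)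
  have hi' : (1 : ℝ) ≤ (i : ℝ) := by exact_mod_cast hi
  have hin' : (i : ℝ) ≤ (n : ℝ) := by exact_mod_cast hin
  nlinarith [mul_le_mul_of_nonneg_left hB (by linarith : (0:ℝ) ≤ (i:ℝ)),
    mul_le_mul_of_nonneg_left hA (by linarith : (0:ℝ) ≤ (n:ℝ) - i)]


theorem stmt6 (G : WGraph V) (hE : G.E.Nonempty)
    (n : ℕ) (hn : n = Fintype.card V) (hn1 : 1 ≤ n)
    (f : ℕ → ℝ) (hmono : Monotone f) (hf0 : f 0 = 0) (hfpos : ∀ x, 1 ≤ x → 0 < f x)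
    (hconv : ∀ x : ℕ, 0 ≤ f x - 2 * f (x + 1) + f (x + 2))
    (Sstar : Finset V) (hne : Sstar.Nonempty)
    (hopt : ∀ S : Finset V, S.Nonempty → G.wS S / f S.card ≤ G.wS Sstar / f Sstar.card)
    (Ss : ℕ → Finset V) (hSn : Ss n = Finset.univ)
    (hpeel : ∀ i, 2 ≤ i → i ≤ n → ∃ v ∈ Ss i,
      (∀ u ∈ Ss i, G.deg (Ss i) v ≤ G.deg (Ss i) u) ∧ Ss (i - 1) = (Ss i).erase v) :
    (f Sstar.card - f (Sstar.card - 1)) * (G.wS Sstar / f Sstar.card) ≤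
      (2 * f n / (n : ℝ)) *
        ((Finset.Icc 1 n).sup' (Finset.nonempty_Icc.mpr hn1) fun i => G.wS (Ss i) / f i) := by
  classical
  set M := (Finset.Icc 1 n).sup' (Finset.nonempty_Icc.mpr hn1) (fun i => G.wS (Ss i) / f i)
    with hM
  have hfn : 0 < f n := hfpos n hn1
  have hn0 : (0:ℝ) < n := by exact_mod_cast hn1
  have hMnn : 0 ≤ M := by
    have h := Finset.le_sup' (fun i => G.wS (Ss i) / f i)
      (Finset.mem_Icc.mpr ⟨hn1, le_refl n⟩)
    exact le_trans (div_nonneg (G.wS_nonneg _) hfn.le) h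
  have hRHS : 0 ≤ (2 * f n / n) * M :=
    mul_nonneg (div_nonneg (by linarith) hn0.le) hMnn
  set k := Sstar.card with hk
  have hk1 : 1 ≤ k := hne.card_pos
  have hfk : 0 < f k := hfpos k hk1
  by_cases hk2 : 2 ≤ k
  case neg =>
    have hk1' : k = 1 := by omega
    obtain ⟨v, hv⟩ := Finset.card_eq_one.mp hk1'
    have hfilter : G.E.filter (fun e => e ∈ ({v} : Finset V).sym2) = ∅ := by
      rw [Finset.filter_eq_empty_iff]
      intro e he hmem
      apply G.not_diag e he
      induction e using Sym2.ind with
      | _ a b =>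
        simp only [Finset.mk_mem_sym2_iff, Finset.mem_singleton] at hmem
        rw [hmem.1, hmem.2]
        exact (Sym2.isDiag_iff_proj_eq).mpr rfl
    have hw0 : G.wS Sstar = 0 := by
      rw [hv, WGraph.wS, hfilter, Finset.sum_empty]
    rw [hw0, zero_div, mul_zero]
    exact hRHS
  case pos =>
    have hcard0 : ∀ d, d < n → (Ss (n - d)).card = n - d := by
      intro d
      induction d with
      | zero => intro _; rw [Nat.sub_zero, hSn, Finset.card_univ, ← hn]
      | succ d ih =>
        intro hdn
        have h2 : 2 ≤ n - d := by omega
        obtain ⟨v, hvmem, _, herase⟩ := hpeel (n - d) h2 (by omega)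
        have hnd : n - (d+1) = (n - d) - 1 := by omega
        rw [hnd, herase, Finset.card_erase_of_mem hvmem, ih (by omega)]
    have hcard : ∀ i, 1 ≤ i → i ≤ n → (Ss i).card = i := by
      intro i h1 h2
      have := hcard0 (n - i) (by omega)
      rwa [Nat.sub_sub_self h2] at this
    have hfind : ∀ i, 1 ≤ i → i ≤ n → Sstar ⊆ Ss i →
        ∃ j, 1 ≤ j ∧ j ≤ n ∧ Sstar ⊆ Ss j ∧ ∃ v ∈ Sstar,
          ∀ u ∈ Ss j, G.deg (Ss j) v ≤ G.deg (Ss j) u := by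
      intro i
      induction i using Nat.strong_induction_on with
      | _ i ih =>
        intro h1 h2 hsub
        have hik : k ≤ i := by
          have := Finset.card_le_card hsub
          rwa [hcard i h1 h2, ← hk] at this
        have hi2 : 2 ≤ i := le_trans hk2 hik
        obtain ⟨v, hvmem, hmin, herase⟩ := hpeel i hi2 h2
        by_cases hvS : v ∈ Sstar
        · exact ⟨i, h1, h2, hsub, v, hvS, hmin⟩
        · refine ih (i-1) (by omega) (by omega) (by omega) ?_
          rw [herase]
          intro x hx
          exact Finset.mem_erase.mpr ⟨fun h => hvS (h ▸ hx), hsub hx⟩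
    obtain ⟨j, hj1, hjn, hsubj, v, hvS, hmin⟩ :=
      hfind n hn1 le_rfl (by rw [hSn]; exact Finset.subset_univ _)
    have hfj : 0 < f j := hfpos j hj1
    have hj0 : (0:ℝ) < j := by exact_mod_cast hj1
    set θ := G.wS Sstar / f k with hθ
    have hwstar : G.wS Sstar = θ * f k := (div_mul_cancel₀ _ hfk.ne').symm
    have hkm1 : 1 ≤ k - 1 := by omega
    have hfkm : 0 < f (k-1) := hfpos _ hkm1
    have hcerase : (Sstar.erase v).card = k - 1 := Finset.card_erase_of_mem hvS
    have herasene : (Sstar.erase v).Nonempty :=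
      Finset.card_pos.mp (by rw [hcerase]; omega)
    have hopt' := hopt (Sstar.erase v) herasene
    rw [hcerase, div_le_iff₀ hfkm] at hopt'
    have hsplit := G.wS_erase Sstar v hvS
    have t1 : (f k - f (k-1)) * θ ≤ G.deg Sstar v := by linarith
    have t2 : (j:ℝ) * G.deg (Ss j) v ≤ 2 * G.wS (Ss j) := by
      have h := Finset.card_nsmul_le_sum (Ss j) (G.deg (Ss j)) (G.deg (Ss j) v)
        (fun u hu => hmin u hu)
      rw [G.handshake, hcard j hj1 hjn, nsmul_eq_mul] at h
      exact h
    have t2' : G.deg Sstar v ≤ G.deg (Ss j) v := G.deg_mono hsubj v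
    set Dj := G.wS (Ss j) / f j with hDj
    have hDnn : 0 ≤ Dj := div_nonneg (G.wS_nonneg _) hfj.le
    have hwj : G.wS (Ss j) = Dj * f j := (div_mul_cancel₀ _ hfj.ne').symm
    have t3 : (n:ℝ) * f j ≤ (j:ℝ) * f n := density_mono f hf0 hconv hj1 hjn
    have t4 : Dj ≤ M := by
      have h := Finset.le_sup' (fun i => G.wS (Ss i) / f i)
        (Finset.mem_Icc.mpr ⟨hj1, hjn⟩)
      exact h
    rw [div_mul_eq_mul_div, le_div_iff₀ hn0]
    have s1 : (j:ℝ) * ((f k - f (k-1)) * θ) ≤ 2 * (Dj * f j) := by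
      have := mul_le_mul_of_nonneg_left (t1.trans t2') hj0.le
      linarith
    have s2 : (n:ℝ) * ((j:ℝ) * ((f k - f (k-1)) * θ)) ≤ (n:ℝ) * (2 * (Dj * f j)) :=
      mul_le_mul_of_nonneg_left s1 hn0.le
    have s3 : 2 * Dj * ((n:ℝ) * f j) ≤ 2 * Dj * ((j:ℝ) * f n) :=
      mul_le_mul_of_nonneg_left t3 (by linarith)
    have s4 : 2 * ((j:ℝ) * f n) * Dj ≤ 2 * ((j:ℝ) * f n) * M :=
      mul_le_mul_of_nonneg_left t4
        (mul_nonneg (by norm_num) (mul_nonneg hj0.le hfn.le))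
    have key : ((f k - f (k-1)) * θ * n) * j ≤ (2 * f n * M) * j := by nlinarith
    exact le_of_mul_le_mul_right key hj0
end

section
/- For every real number α ∈ [1,2] and all integers s, n with 2 ≤ s ≤ n, it holds that min{ 2^{α−1}·s^{2−α}, 2·n^{α−1}/(s^α − (s−1)^α) } ≤ 2·n^{(α−1)(2−α)}. Consequently, for f(x)=x^α the approximation ratio min{ (f(2)/2)/(f(s)/s²), (2f(n)/n)/(f(s)−f(s−1)) } is at most 2·n^{(α−1)(2−α)}. -/
theorem stmt8 (α : ℝ) (hα1 : 1 ≤ α) (hα2 : α ≤ 2)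
    (s n : ℕ) (hs : 2 ≤ s) (hsn : s ≤ n)
    (f : ℕ → ℝ) (hf : ∀ x : ℕ, f x = (x : ℝ) ^ α) :
    min ((2 : ℝ) ^ (α - 1) * (s : ℝ) ^ (2 - α))
        (2 * (n : ℝ) ^ (α - 1) / ((s : ℝ) ^ α - ((s : ℝ) - 1) ^ α)) ≤
      2 * (n : ℝ) ^ ((α - 1) * (2 - α)) ∧
    min ((f 2 / 2) / (f s / (s : ℝ) ^ 2)) ((2 * f n / (n : ℝ)) / (f s - f (s - 1))) ≤
      2 * (n : ℝ) ^ ((α - 1) * (2 - α)) := by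
  have hs2 : (2:ℝ) ≤ (s:ℝ) := by exact_mod_cast hs
  have hsn' : (s:ℝ) ≤ (n:ℝ) := by exact_mod_cast hsn
  have hst : (0:ℝ) < (s:ℝ) := by linarith
  have hn0 : (0:ℝ) < (n:ℝ) := by linarith
  have hα1' : (0:ℝ) ≤ α - 1 := by linarith
  have hα2' : (0:ℝ) ≤ 2 - α := by linarith
  -- key: s^(α-1) ≤ s^α - (s-1)^α
  have hx0 : (0:ℝ) < ((s:ℝ) - 1) / s := by
    apply div_pos <;> linarith
  have hx1 : ((s:ℝ) - 1) / s ≤ 1 := by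
    rw [div_le_one hst]; linarith
  have h1 : ((s:ℝ) - 1) ^ α = (s:ℝ) ^ α * (((s:ℝ) - 1) / s) ^ α := by
    rw [← Real.mul_rpow hst.le hx0.le, mul_div_cancel₀ _ hst.ne']
  have hxα : (((s:ℝ) - 1) / s) ^ α ≤ ((s:ℝ) - 1) / s := by
    calc (((s:ℝ) - 1) / s) ^ α ≤ (((s:ℝ) - 1) / s) ^ (1:ℝ) :=
          Real.rpow_le_rpow_of_exponent_ge hx0 hx1 hα1
      _ = ((s:ℝ) - 1) / s := Real.rpow_one _
  have hsapos : (0:ℝ) < (s:ℝ) ^ α := Real.rpow_pos_of_pos hst _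
  have hkey : (s:ℝ) ^ (α - 1) ≤ (s:ℝ) ^ α - ((s:ℝ) - 1) ^ α := by
    have h2 : (s:ℝ) ^ (α - 1) = (s:ℝ) ^ α / s := by
      rw [Real.rpow_sub hst, Real.rpow_one]
    rw [h1, h2]
    have h3 : 1 / (s:ℝ) ≤ 1 - ((s:ℝ) - 1) / s := by
      have : 1 - ((s:ℝ) - 1) / s = 1 / s := by field_simp; ring
      rw [this]
    have h4 : (s:ℝ) ^ α * (1 / s) ≤ (s:ℝ) ^ α * (1 - (((s:ℝ) - 1) / s) ^ α) := by
      apply mul_le_mul_of_nonneg_left _ hsapos.le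
      linarith
    calc (s:ℝ) ^ α / s = (s:ℝ) ^ α * (1 / s) := by ring
      _ ≤ (s:ℝ) ^ α * (1 - (((s:ℝ) - 1) / s) ^ α) := h4
      _ = (s:ℝ) ^ α - (s:ℝ) ^ α * (((s:ℝ) - 1) / s) ^ α := by ring
  have hsa1pos : (0:ℝ) < (s:ℝ) ^ (α - 1) := Real.rpow_pos_of_pos hst _
  have hD : (0:ℝ) < (s:ℝ) ^ α - ((s:ℝ) - 1) ^ α := lt_of_lt_of_le hsa1pos hkey
  have part1 : min ((2 : ℝ) ^ (α - 1) * (s : ℝ) ^ (2 - α))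
        (2 * (n : ℝ) ^ (α - 1) / ((s : ℝ) ^ α - ((s : ℝ) - 1) ^ α)) ≤
      2 * (n : ℝ) ^ ((α - 1) * (2 - α)) := by
    rcases le_or_gt (s:ℝ) ((n:ℝ) ^ (α - 1)) with h | h
    · refine (min_le_left _ _).trans ?_
      have h2a : (2:ℝ) ^ (α - 1) ≤ 2 := by
        calc (2:ℝ) ^ (α - 1) ≤ (2:ℝ) ^ (1:ℝ) :=
              Real.rpow_le_rpow_of_exponent_le one_le_two (by linarith)
          _ = 2 := Real.rpow_one 2
      have h2b : (s:ℝ) ^ (2 - α) ≤ ((n:ℝ) ^ (α - 1)) ^ (2 - α) :=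
        Real.rpow_le_rpow hst.le h hα2'
      calc (2:ℝ) ^ (α - 1) * (s:ℝ) ^ (2 - α) ≤ 2 * ((n:ℝ) ^ (α - 1)) ^ (2 - α) := by
            apply mul_le_mul h2a h2b (Real.rpow_nonneg hst.le _) (by norm_num)
        _ = 2 * (n:ℝ) ^ ((α - 1) * (2 - α)) := by rw [← Real.rpow_mul hn0.le]
    · refine (min_le_right _ _).trans ?_
      have hs' : (n:ℝ) ^ ((α - 1) * (α - 1)) ≤ (s:ℝ) ^ (α - 1) := by
        rw [Real.rpow_mul hn0.le]
        exact Real.rpow_le_rpow (Real.rpow_nonneg hn0.le _) h.le hα1'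
      have hnp : (0:ℝ) < (n:ℝ) ^ ((α - 1) * (α - 1)) := Real.rpow_pos_of_pos hn0 _
      have hnum : (0:ℝ) ≤ 2 * (n:ℝ) ^ (α - 1) := by positivity
      calc 2 * (n:ℝ) ^ (α - 1) / ((s:ℝ) ^ α - ((s:ℝ) - 1) ^ α)
            ≤ 2 * (n:ℝ) ^ (α - 1) / (n:ℝ) ^ ((α - 1) * (α - 1)) := by
              gcongr
              exact hs'.trans hkey
        _ = 2 * (n:ℝ) ^ ((α - 1) * (2 - α)) := by
              rw [mul_div_assoc, ← Real.rpow_sub hn0]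
              congr 2
              ring
  refine ⟨part1, ?_⟩
  have hcast : ((s - 1 : ℕ) : ℝ) = (s:ℝ) - 1 := by
    have : 1 ≤ s := by omega
    push_cast [this]; ring
  have e1 : (f 2 / 2) / (f s / (s : ℝ) ^ 2) = (2 : ℝ) ^ (α - 1) * (s : ℝ) ^ (2 - α) := by
    rw [hf, hf]
    push_cast
    rw [Real.rpow_sub (by norm_num : (0:ℝ) < 2), Real.rpow_one,
      Real.rpow_sub hst]
    have : (s:ℝ) ^ (2:ℝ) = (s:ℝ) ^ (2:ℕ) := by
      rw [← Real.rpow_natCast]; norm_num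
    rw [this]
    field_simp
  have e2 : (2 * f n / (n : ℝ)) / (f s - f (s - 1)) =
      2 * (n : ℝ) ^ (α - 1) / ((s : ℝ) ^ α - ((s : ℝ) - 1) ^ α) := by
    rw [hf, hf, hf, hcast, Real.rpow_sub hn0, Real.rpow_one]
    ring
  rw [e1, e2]
  exact part1
end

section
/- For every real number λ ∈ [0,1) and all integers k, s with 2 ≤ k ≤ s, it holds that 2·(λ/k + (1−λ)) / (λ/s + (1−λ)) ≤ 2 + 2λ/((1−λ)·k). In particular, for k = 2 the left-hand side is at most (2−λ)/(1−λ), and for any ε > 0 and any k ≥ (2/ε)·(λ/(1−λ)) the left-hand side is at most 2 + ε. -/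
theorem stmt9 (lam : ℝ) (h0 : 0 ≤ lam) (h1 : lam < 1)
    (k s : ℕ) (hk : 2 ≤ k) (hks : k ≤ s) :
    2 * (lam / k + (1 - lam)) / (lam / s + (1 - lam)) ≤ 2 + 2 * lam / ((1 - lam) * k) ∧
    (k = 2 → 2 * (lam / k + (1 - lam)) / (lam / s + (1 - lam)) ≤ (2 - lam) / (1 - lam)) ∧
    (∀ ε : ℝ, 0 < ε → (2 / ε) * (lam / (1 - lam)) ≤ k →
      2 * (lam / k + (1 - lam)) / (lam / s + (1 - lam)) ≤ 2 + ε) := by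
  have hk0 : (0:ℝ) < k := by
    have : (0:ℕ) < k := by omega
    exact_mod_cast this
  have hs0 : (0:ℝ) < s := by
    have : (0:ℕ) < s := by omega
    exact_mod_cast this
  have hl : 0 < 1 - lam := by linarith
  have hnum : 0 < 2 * (lam / k + (1 - lam)) := by positivity
  have hden : 1 - lam ≤ lam / s + (1 - lam) := by
    have : 0 ≤ lam / s := by positivity
    linarith
  have key : 2 * (lam / k + (1 - lam)) / (lam / s + (1 - lam))
      ≤ 2 + 2 * lam / ((1 - lam) * k) := by
    have h2 : 2 * (lam / k + (1 - lam)) / (lam / s + (1 - lam))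
        ≤ 2 * (lam / k + (1 - lam)) / (1 - lam) :=
      div_le_div_of_nonneg_left (le_of_lt hnum) hl hden
    have h3 : 2 * (lam / k + (1 - lam)) / (1 - lam)
        = 2 + 2 * lam / ((1 - lam) * k) := by
      field_simp
      ring
    linarith [h2, h3.le, h3.ge]
  refine ⟨key, ?_, ?_⟩
  · intro hk2
    subst hk2
    have : 2 + 2 * lam / ((1 - lam) * (2:ℕ)) = (2 - lam) / (1 - lam) := by
      push_cast
      field_simp
      ring
    linarith [key, this.le]
  · intro ε hε hke
    have h' : 2 * lam / (1 - lam) / ε ≤ (k:ℝ) := by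
      have heq : 2 / ε * (lam / (1 - lam)) = 2 * lam / (1 - lam) / ε := by ring
      linarith [hke, heq.le, heq.ge]
    have h2 : 2 * lam / (1 - lam) ≤ (k:ℝ) * ε := (div_le_iff₀ hε).mp h'
    have h3 : 2 * lam ≤ 2 * lam / (1 - lam) * (1 - lam) := by
      rw [div_mul_cancel₀ _ hl.ne']
    have hle : 2 * lam / ((1 - lam) * k) ≤ ε := by
      rw [div_le_iff₀ (by positivity)]
      nlinarith [mul_le_mul_of_nonneg_right h2 hl.le]
    linarith [key]
end

section
/- Let λ ∈ [0,1) be real and define f(x) = x²/(λx + (1−λ)) for x ≥ 1 and f(0)=0. For all integers s, n with 2 ≤ s ≤ n, it holds that min{ (f(2)/2)/(f(s)/s²), (2f(n)/n)/(f(s)−f(s−1)) } ≤ 4/(1+λ). Equivalently, min{ 2(λs+(1−λ))/(1+λ), (2n/(λn+(1−λ))) / ( s²/(λs+(1−λ)) − (s−1)²/(λ(s−1)+(1−λ)) ) } ≤ 4/(1+λ). -/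
lemma key_min_bound (a x y : ℝ) (h0 : 0 ≤ a) (h1 : a < 1) (hx : 2 ≤ x) (hxy : x ≤ y) :
    min (2 * (a * x + (1 - a)) / (1 + a))
        ((2 * y / (a * y + (1 - a))) /
          (x ^ 2 / (a * x + (1 - a)) - (x - 1) ^ 2 / (a * (x - 1) + (1 - a)))) ≤
      4 / (1 + a) := by
  have ha1 : (0:ℝ) < 1 + a := by linarith
  have hu : 0 < a * x + (1 - a) := by nlinarith
  have hv : 0 < a * (x - 1) + (1 - a) := by nlinarith
  have hw : 0 < a * y + (1 - a) := by nlinarith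
  set N : ℝ := a * (x ^ 2 - 3 * x + 1) + 2 * x - 1 with hNdef
  have hN : 0 < N := by
    nlinarith [mul_nonneg h0 (mul_nonneg (by linarith : (0:ℝ) ≤ x - 1) (by linarith : (0:ℝ) ≤ x - 2))]
  have hD : x ^ 2 / (a * x + (1 - a)) - (x - 1) ^ 2 / (a * (x - 1) + (1 - a))
      = N / ((a * x + (1 - a)) * (a * (x - 1) + (1 - a))) := by
    rw [div_sub_div _ _ hu.ne' hv.ne', hNdef]
    congr 1
    ring
  by_cases hc : a * (x - 1) ≤ 1
  · apply le_trans (min_le_left _ _)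
    rw [div_le_div_iff₀ ha1 ha1]
    nlinarith
  · push_neg at hc
    have ha : 0 < a := by nlinarith
    apply le_trans (min_le_right _ _)
    rw [hD]
    have hΔ : (1 + a) * ((a * x + (1 - a)) * (a * (x - 1) + (1 - a))) ≤ 2 * a * N := by
      nlinarith [mul_nonneg (mul_nonneg (by linarith : (0:ℝ) ≤ a * (x - 1) - 1)
        (by nlinarith : (0:ℝ) ≤ a * (x - 1) + 3 - a)) (by linarith : (0:ℝ) ≤ 1 - a)]
    have heq : (2 * y / (a * y + (1 - a))) / (N / ((a * x + (1 - a)) * (a * (x - 1) + (1 - a))))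
        = (2 * y * ((a * x + (1 - a)) * (a * (x - 1) + (1 - a)))) / ((a * y + (1 - a)) * N) := by
      field_simp
    rw [heq, div_le_div_iff₀ (by positivity) ha1]
    have hy : (0:ℝ) < y := by linarith
    nlinarith [mul_nonneg hy.le (by linarith : (0:ℝ) ≤ 2 * a * N - (1 + a) * ((a * x + (1 - a)) * (a * (x - 1) + (1 - a)))),
      mul_pos (show (0:ℝ) < 1 - a by linarith) hN]

theorem stmt10 (lam : ℝ) (h0 : 0 ≤ lam) (h1 : lam < 1)
    (f : ℕ → ℝ) (hf0 : f 0 = 0)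
    (hf : ∀ x : ℕ, 1 ≤ x → f x = (x : ℝ) ^ 2 / (lam * x + (1 - lam)))
    (s n : ℕ) (hs : 2 ≤ s) (hsn : s ≤ n) :
    min ((f 2 / 2) / (f s / (s : ℝ) ^ 2)) ((2 * f n / (n : ℝ)) / (f s - f (s - 1))) ≤
      4 / (1 + lam) ∧
    min (2 * (lam * s + (1 - lam)) / (1 + lam))
        ((2 * n / (lam * n + (1 - lam))) /
          ((s : ℝ) ^ 2 / (lam * s + (1 - lam)) -
            ((s : ℝ) - 1) ^ 2 / (lam * ((s : ℝ) - 1) + (1 - lam)))) ≤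
      4 / (1 + lam) := by
  have hx2 : (2:ℝ) ≤ (s:ℝ) := by exact_mod_cast hs
  have hxy : (s:ℝ) ≤ (n:ℝ) := by exact_mod_cast hsn
  have hkey := key_min_bound lam (s:ℝ) (n:ℝ) h0 h1 hx2 hxy
  have hs0 : (0:ℝ) < (s:ℝ) := by linarith
  have hn0 : (0:ℝ) < (n:ℝ) := by linarith
  have hf2 := hf 2 (by norm_num)
  have hfs := hf s (by omega)
  have hfn := hf n (by omega)
  have hfs1 := hf (s - 1) (by omega)
  have hcast : ((s - 1 : ℕ) : ℝ) = (s:ℝ) - 1 := by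
    have h1s : (1:ℕ) ≤ s := by omega
    push_cast [h1s]
    ring
  rw [hcast] at hfs1
  have ha1 : (0:ℝ) < 1 + lam := by linarith
  have hu : (0:ℝ) < lam * (s:ℝ) + (1 - lam) := by nlinarith
  have hv : (0:ℝ) < lam * ((s:ℝ) - 1) + (1 - lam) := by nlinarith
  have hw : (0:ℝ) < lam * (n:ℝ) + (1 - lam) := by nlinarith
  have e1 : (f 2 / 2) / (f s / (s : ℝ) ^ 2) = 2 * (lam * (s:ℝ) + (1 - lam)) / (1 + lam) := by
    rw [hf2, hfs]
    push_cast
    have h2 : lam * (2:ℝ) + (1 - lam) = 1 + lam := by ring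
    rw [h2]
    field_simp
  have e2 : (2 * f n / (n : ℝ)) / (f s - f (s - 1)) =
      (2 * (n:ℝ) / (lam * (n:ℝ) + (1 - lam))) /
        ((s : ℝ) ^ 2 / (lam * (s:ℝ) + (1 - lam)) -
          ((s : ℝ) - 1) ^ 2 / (lam * ((s : ℝ) - 1) + (1 - lam))) := by
    rw [hfn, hfs, hfs1]
    congr 1
    field_simp
  rw [e1, e2]
  exact ⟨hkey, hkey⟩
end

section
/- Let λ̂ > 0 be a real number, let k be an integer with 2 ≤ k ≤ n, and let w_k ∈ ℝ be such that (k, w_k) ∈ P and w(S) − λ̂·|S| < w_k − λ̂·k for every S ⊆ V with (|S|, w(S)) ≠ (k, w_k) (i.e., (k, w_k) is a dense frontier point witnessed by λ̂). Define f:ℤ_{≥0}→ℝ by f(0)=0 and f(x) = λ̂(x−k) + w_k for x ≥ 1. Then f is a monotonically non-decreasing concave size function with f(x) > 0 for x ≥ 1, and every nonempty S ⊆ V maximizing w(S)/f(|S|) satisfies |S| = k and w(S) = w_k. -/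
variable {V : Type} [Fintype V] [DecidableEq V]

theorem stmt11 (G : WGraph V) (lam : ℝ) (hlam : 0 < lam)
    (k : ℕ) (hk2 : 2 ≤ k) (hkn : k ≤ Fintype.card V)
    (wk : ℝ) (hwit : ∃ S : Finset V, S.card = k ∧ G.wS S = wk)
    (hfront : ∀ S : Finset V, (S.card, G.wS S) ≠ (k, wk) →
      G.wS S - lam * S.card < wk - lam * k)
    (f : ℕ → ℝ) (hf0 : f 0 = 0)
    (hf : ∀ x : ℕ, 1 ≤ x → f x = lam * ((x : ℝ) - k) + wk) :
    (Monotone f ∧ (∀ x, 1 ≤ x → 0 < f x) ∧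
      (∀ x : ℕ, f x - 2 * f (x + 1) + f (x + 2) ≤ 0)) ∧
    (∀ S : Finset V, S.Nonempty →
      (∀ T : Finset V, T.Nonempty → G.wS T / f T.card ≤ G.wS S / f S.card) →
      S.card = k ∧ G.wS S = wk) := by
  have hempty : G.wS (∅ : Finset V) = 0 := by simp [WGraph.wS]
  have hwk : lam * k < wk := by
    have h := hfront ∅ (by
      intro hcontra
      have h0 := congrArg Prod.fst hcontra
      simp at h0
      omega)
    rw [hempty, Finset.card_empty] at h
    push_cast at h
    linarith
  have hfpos : ∀ x : ℕ, 1 ≤ x → 0 < f x := by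
    intro x hx
    rw [hf x hx]
    have hx1 : (1:ℝ) ≤ x := by exact_mod_cast hx
    nlinarith
  have hmono : Monotone f := by
    intro a b hab
    rcases Nat.eq_zero_or_pos a with ha | ha
    · subst ha
      rw [hf0]
      rcases Nat.eq_zero_or_pos b with hb | hb
      · simp [hb, hf0]
      · exact (hfpos b hb).le
    · have hb : 1 ≤ b := le_trans ha hab
      rw [hf a ha, hf b hb]
      have : (a:ℝ) ≤ b := by exact_mod_cast hab
      nlinarith
  have hconc : ∀ x : ℕ, f x - 2 * f (x+1) + f (x+2) ≤ 0 := by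
    intro x
    rcases Nat.eq_zero_or_pos x with hx | hx
    · subst hx
      rw [hf0, hf 1 le_rfl, hf 2 (by norm_num)]
      push_cast
      nlinarith
    · rw [hf x hx, hf (x+1) (by omega), hf (x+2) (by omega)]
      push_cast
      nlinarith
  refine ⟨⟨hmono, hfpos, hconc⟩, ?_⟩
  intro S hS hmax
  obtain ⟨T0, hT0card, hT0w⟩ := hwit
  have hT0ne : T0.Nonempty := Finset.card_pos.mp (by omega)
  have hwkpos : 0 < wk := by nlinarith
  have hfk : f k = wk := by rw [hf k (by omega)]; ring
  have h1 : (1:ℝ) ≤ G.wS S / f S.card := by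
    have h := hmax T0 hT0ne
    rw [hT0card, hT0w, hfk, div_self (ne_of_gt hwkpos)] at h
    exact h
  have hScard : 1 ≤ S.card := hS.card_pos
  have hfS : 0 < f S.card := hfpos _ hScard
  have h2 : f S.card ≤ G.wS S := by
    rw [le_div_iff₀ hfS] at h1
    linarith
  by_contra hcon
  have hne : (S.card, G.wS S) ≠ (k, wk) := by
    intro h
    rw [Prod.ext_iff] at h
    exact hcon ⟨h.1, h.2⟩
  have h3 := hfront S hne
  rw [hf S.card hScard] at h2
  nlinarith
end

section
/- Let f be a strictly concave size function, i.e., f(x) − 2f(x+1) + f(x+2) < 0 for all x ∈ ℤ_{≥0}. Let S* be an optimal solution to f-DS and write k = |S*|. Then there exists λ̂ > 0 such that (k, w(S*)) is the unique maximizer of y − λ̂x over P; that is, w(S) − λ̂·|S| < w(S*) − λ̂·k for every S ⊆ V with (|S|, w(S)) ≠ (k, w(S*)). In other words, (|S*|, w(S*)) is a dense frontier point. -/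
variable {V : Type} [Fintype V] [DecidableEq V]

lemma wS_empty (G : WGraph V) : G.wS (∅ : Finset V) = 0 := by
  unfold WGraph.wS
  simp [Finset.sym2_empty]

lemma exists_pair_pos (G : WGraph V) : ∀ e ∈ G.E, ∃ S : Finset V, S.Nonempty ∧ S.card = 2 ∧ 0 < G.wS S := by
  intro e
  induction e using Sym2.ind with
  | _ a b =>
    intro he
    have hab : a ≠ b := fun h => G.not_diag _ he (by simp [h])
    refine ⟨{a, b}, ⟨a, by simp⟩, ?_, ?_⟩
    · rw [Finset.card_insert_of_notMem (by simpa), Finset.card_singleton]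
    · have hmem : s(a, b) ∈ G.E.filter (fun e => e ∈ ({a, b} : Finset V).sym2) := by
        simp [Finset.mem_filter, he, Finset.mk_mem_sym2_iff]
      unfold WGraph.wS
      exact Finset.sum_pos (fun i hi => G.w_pos i (Finset.mem_filter.mp hi).1) ⟨_, hmem⟩

theorem stmt12 (G : WGraph V) (hE : G.E.Nonempty)
    (f : ℕ → ℝ) (hmono : Monotone f) (hf0 : f 0 = 0) (hfpos : ∀ x, 1 ≤ x → 0 < f x)
    (hconc : ∀ x : ℕ, f x - 2 * f (x + 1) + f (x + 2) < 0)
    (Sstar : Finset V) (hne : Sstar.Nonempty)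
    (hopt : ∀ S : Finset V, S.Nonempty → G.wS S / f S.card ≤ G.wS Sstar / f Sstar.card) :
    ∃ lam : ℝ, 0 < lam ∧
      ∀ S : Finset V, (S.card, G.wS S) ≠ (Sstar.card, G.wS Sstar) →
        G.wS S - lam * S.card < G.wS Sstar - lam * Sstar.card := by
  classical
  obtain ⟨k, hk⟩ : ∃ k, k = Sstar.card := ⟨_, rfl⟩
  rw [← hk]
  rw [← hk] at hopt
  have hk1 : 1 ≤ k := hk ▸ Finset.card_pos.mpr hne
  obtain ⟨d, hd⟩ : ∃ d : ℕ → ℝ, ∀ j, d j = f (j + 1) - f j := ⟨_, fun _ => rfl⟩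
  have hdd : ∀ n, d (n + 1) < d n := by
    intro n
    have h := hconc n
    rw [hd, hd]
    have e : n + 1 + 1 = n + 2 := rfl
    rw [e]
    linarith
  have hdanti : StrictAnti d := strictAnti_nat_of_succ_lt hdd
  have hdnn : ∀ j, 0 ≤ d j := by
    intro j
    have := hmono (Nat.le_succ j)
    rw [hd]
    linarith
  have lemA : ∀ a m : ℕ, f (a + m) - f a ≤ m * d a := by
    intro a m
    induction m with
    | zero => simp
    | succ m ih =>
      have h1 : d (a + m) ≤ d a := hdanti.antitone (Nat.le_add_right a m)
      have e1 : a + (m + 1) = (a + m) + 1 := by omega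
      have e2 : f ((a + m) + 1) = f (a + m) + d (a + m) := by rw [hd]; ring
      rw [e1, e2]
      push_cast
      linarith
  have lemB : ∀ a m : ℕ, ((m : ℝ) + 1) * d (a + m) ≤ f (a + m + 1) - f a := by
    intro a m
    induction m with
    | zero => rw [hd]; push_cast; ring_nf; simp
    | succ m ih =>
      have h1 : d (a + m + 1) ≤ d (a + m) := (hdanti (by omega)).le
      have e2 : f ((a + m + 1) + 1) = f (a + m + 1) + d (a + m + 1) := by rw [hd]; ring
      have e1 : a + (m + 1) + 1 = (a + m + 1) + 1 := by omega
      have e3 : a + (m + 1) = a + m + 1 := by omega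
      rw [e1, e2, e3]
      push_cast
      nlinarith [Nat.cast_nonneg (α := ℝ) m]
  obtain ⟨W, hWdef⟩ : ∃ W, W = G.wS Sstar := ⟨_, rfl⟩
  rw [← hWdef]
  rw [← hWdef] at hopt
  obtain ⟨ρ, hρdef⟩ : ∃ ρ, ρ = W / f k := ⟨_, rfl⟩
  rw [← hρdef] at hopt
  have hfk : 0 < f k := hfpos k hk1
  have hρpos : 0 < ρ := by
    obtain ⟨e, heE⟩ := hE
    obtain ⟨S0, hS0ne, hS0c, hS0pos⟩ := exists_pair_pos G e heE
    have h2 : 0 < f S0.card := by rw [hS0c]; exact hfpos 2 (by norm_num)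
    calc (0:ℝ) < G.wS S0 / f S0.card := div_pos hS0pos h2
      _ ≤ ρ := hopt S0 hS0ne
  have hWρ : W = ρ * f k := by
    rw [hρdef]; field_simp
  have hub : ∀ S : Finset V, G.wS S ≤ ρ * f S.card := by
    intro S
    rcases S.eq_empty_or_nonempty with rfl | hSne
    · simp [wS_empty, hf0]
    · have h1 : 0 < f S.card := hfpos _ (Finset.card_pos.mpr hSne)
      have h2 := hopt S hSne
      rw [div_le_iff₀ h1] at h2
      linarith
  have hkm : k - 1 + 1 = k := by omega
  have hdk1 : d k < d (k - 1) := by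
    have := hdd (k - 1)
    rwa [hkm] at this
  have hdk1pos : 0 < d (k - 1) := lt_of_le_of_lt (hdnn k) hdk1
  have hsum : (0:ℝ) < d (k - 1) + d k := by linarith [hdnn k]
  obtain ⟨lam, hlam⟩ : ∃ l : ℝ, l = ρ * (d (k - 1) + d k) / 2 := ⟨_, rfl⟩
  have hsplit : ρ * (d (k - 1) + d k) = ρ * d (k - 1) + ρ * d k := mul_add ρ _ _
  have hmul := mul_lt_mul_of_pos_left hdk1 hρpos
  have hlampos : 0 < lam := by rw [hlam]; exact div_pos (mul_pos hρpos hsum) two_pos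
  have hlam1 : ρ * d k < lam := by rw [hlam]; linarith
  have hlam2 : lam < ρ * d (k - 1) := by rw [hlam]; linarith
  refine ⟨lam, hlampos, ?_⟩
  intro S hS
  rcases lt_trichotomy S.card k with hlt | heq | hgt
  · obtain ⟨m, hm⟩ : ∃ m, k = S.card + m + 1 := ⟨k - S.card - 1, by omega⟩
    have hB := lemB S.card m
    have e1 : S.card + m + 1 = k := hm.symm
    have e2 : S.card + m = k - 1 := by omega
    rw [e1, e2] at hB
    have hubS := hub S
    have h1 : ((m : ℝ) + 1) * lam < ((m : ℝ) + 1) * (ρ * d (k - 1)) := by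
      have hp : (0:ℝ) < (m : ℝ) + 1 := by positivity
      exact (mul_lt_mul_iff_right₀ hp).mpr hlam2
    have h2 : ((m : ℝ) + 1) * (ρ * d (k - 1)) ≤ ρ * (f k - f S.card) := by
      have := mul_le_mul_of_nonneg_left hB hρpos.le
      nlinarith
    have hc : (k : ℝ) = (S.card : ℝ) + (m : ℝ) + 1 := by exact_mod_cast congrArg Nat.cast hm
    have e4 : lam * (k : ℝ) = lam * S.card + ((m : ℝ) + 1) * lam := by rw [hc]; ring
    have e5 : ρ * (f k - f S.card) = ρ * f k - ρ * f S.card := by ring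
    rw [hWρ]
    linarith
  · have hne2 : G.wS S ≠ W := by
      intro h
      apply hS
      rw [heq, h, hWdef]
    have hle : G.wS S ≤ W := by
      have := hub S
      rw [heq, ← hWρ] at this
      exact this
    have : G.wS S < W := lt_of_le_of_ne hle hne2
    rw [heq]
    linarith
  · obtain ⟨m, hm⟩ : ∃ m, S.card = k + (m + 1) := ⟨S.card - k - 1, by omega⟩
    have hA := lemA k (m + 1)
    rw [← hm] at hA
    have hubS := hub S
    have h1 : ((m : ℝ) + 1) * (ρ * d k) < ((m : ℝ) + 1) * lam := by
      have hp : (0:ℝ) < (m : ℝ) + 1 := by positivity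
      exact (mul_lt_mul_iff_right₀ hp).mpr hlam1
    have h2 : ρ * (f S.card - f k) ≤ ((m : ℝ) + 1) * (ρ * d k) := by
      have := mul_le_mul_of_nonneg_left hA hρpos.le
      push_cast at this
      nlinarith
    have hc : (S.card : ℝ) = (k : ℝ) + (m : ℝ) + 1 := by exact_mod_cast congrArg Nat.cast hm
    have e4 : lam * (S.card : ℝ) = lam * k + ((m : ℝ) + 1) * lam := by rw [hc]; ring
    have e5 : ρ * (f S.card - f k) = ρ * f S.card - ρ * f k := by ring
    rw [hWρ]
    linarith
end

section
/- Let f:ℤ_{≥0}→ℝ be concave (f(x)−2f(x+1)+f(x+2) ≤ 0 for all x) with f(0)=0, and let k, n be integers with 1 ≤ k ≤ n. If y_1 ≥ y_2 ≥ … ≥ y_n are real numbers in [0,1] with Σ_{h=1}^n y_h = k, then Σ_{h=1}^n (f(h) − f(h−1))·y_h ≤ f(k). -/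
theorem stmt14 (f : ℕ → ℝ) (hf0 : f 0 = 0)
    (hconc : ∀ x : ℕ, f x - 2 * f (x + 1) + f (x + 2) ≤ 0)
    (k n : ℕ) (hk1 : 1 ≤ k) (hkn : k ≤ n)
    (y : ℕ → ℝ) (hmono : ∀ h : ℕ, 1 ≤ h → h < n → y (h + 1) ≤ y h)
    (hrange : ∀ h : ℕ, 1 ≤ h → h ≤ n → y h ∈ Set.Icc (0 : ℝ) 1)
    (hsum : ∑ h ∈ Finset.Icc 1 n, y h = (k : ℝ)) :
    ∑ h ∈ Finset.Icc 1 n, (f h - f (h - 1)) * y h ≤ f k := by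
  set D : ℕ → ℝ := fun i => f (i + 1) - f i with hD
  have hstep : ∀ i, D (i + 1) ≤ D i := by
    intro i
    have := hconc i
    simp only [hD]
    linarith
  have hanti : ∀ a b : ℕ, a ≤ b → D b ≤ D a := fun a b h =>
    antitone_nat_of_succ_le hstep h
  -- reindex the main sum over range n
  have hrw : ∑ h ∈ Finset.Icc 1 n, (f h - f (h - 1)) * y h
      = ∑ i ∈ Finset.range n, D i * y (i + 1) := by
    rw [show Finset.Icc 1 n = Finset.Ico 1 (n+1) by rfl, Finset.sum_Ico_eq_sum_range]
    have hn : n + 1 - 1 = n := by omega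
    rw [hn]
    refine Finset.sum_congr rfl fun i _ => ?_
    have h1 : 1 + i = i + 1 := by omega
    rw [h1]
    simp [hD]
  -- reindex the y-sum
  have hysum : ∑ i ∈ Finset.range n, y (i + 1) = (k : ℝ) := by
    rw [← hsum, show Finset.Icc 1 n = Finset.Ico 1 (n+1) by rfl, Finset.sum_Ico_eq_sum_range]
    have hn : n + 1 - 1 = n := by omega
    rw [hn]
    refine Finset.sum_congr rfl fun i _ => ?_
    have h1 : 1 + i = i + 1 := by omega
    rw [h1]
  -- indicator sum
  have hind : ∑ i ∈ Finset.range n, (if i < k then (1 : ℝ) else 0) = (k : ℝ) := by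
    rw [Finset.sum_ite, Finset.sum_const, Finset.sum_const]
    have : Finset.filter (fun i => i < k) (Finset.range n) = Finset.range k := by
      ext i; simp; omega
    simp [this]
  -- f k as telescoping sum
  have hfk : ∑ i ∈ Finset.range k, D i = f k := by
    have := Finset.sum_range_sub f k
    simp only [hD]
    rw [this, hf0, sub_zero]
  have hfk2 : ∑ i ∈ Finset.range n, D i * (if i < k then (1 : ℝ) else 0) = f k := by
    rw [← hfk]
    rw [← Finset.sum_subset (Finset.range_subset_range.mpr hkn)]
    · refine Finset.sum_congr rfl fun i hi => ?_
      have : i < k := Finset.mem_range.mp hi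
      simp [this]
    · intro i _ hi
      have : ¬ i < k := fun h => hi (Finset.mem_range.mpr h)
      simp [this]
  set g : ℕ → ℝ := fun i => y (i + 1) - (if i < k then 1 else 0) with hg
  have hgsum : ∑ i ∈ Finset.range n, g i = 0 := by
    simp only [hg, Finset.sum_sub_distrib, hysum, hind, sub_self]
  have hterm : ∀ i ∈ Finset.range n, D i * g i ≤ D (k - 1) * g i := by
    intro i hi
    have hin : i < n := Finset.mem_range.mp hi
    by_cases hik : i < k
    · have hDle : D (k - 1) ≤ D i := hanti i (k - 1) (by omega)
      have hy1 : y (i + 1) ≤ 1 := (hrange (i + 1) (by omega) (by omega)).2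
      have hgle : g i ≤ 0 := by simp [hg, hik]; linarith
      exact mul_le_mul_of_nonpos_right hDle hgle
    · have hDle : D i ≤ D (k - 1) := hanti (k - 1) i (by omega)
      have hy0 : 0 ≤ y (i + 1) := (hrange (i + 1) (by omega) (by omega)).1
      have hgge : 0 ≤ g i := by simp [hg, hik]; linarith
      exact mul_le_mul_of_nonneg_right hDle hgge
  calc ∑ h ∈ Finset.Icc 1 n, (f h - f (h - 1)) * y h
      = ∑ i ∈ Finset.range n, D i * y (i + 1) := hrw
    _ = ∑ i ∈ Finset.range n, (D i * g i + D i * (if i < k then (1 : ℝ) else 0)) := by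
        refine Finset.sum_congr rfl fun i _ => ?_
        simp only [hg]; ring
    _ = ∑ i ∈ Finset.range n, D i * g i + f k := by
        rw [Finset.sum_add_distrib, hfk2]
    _ ≤ ∑ i ∈ Finset.range n, D (k - 1) * g i + f k :=
        add_le_add_left (Finset.sum_le_sum hterm) _
    _ = f k := by rw [← Finset.mul_sum, hgsum, mul_zero, zero_add]
end

section
/- Let f be a concave size function, let S* be an optimal solution to f-DS, and write k* = |S*|. Let (x*, y*) be an optimal solution to LP_{k*}, i.e., a feasible solution whose objective value is at least that of every feasible solution. For r ∈ ℝ, let S(r) = {v ∈ V : y*_v ≥ r}. Then there exists a real number r ∈ (0, 1] such that S(r) is nonempty and w(S(r))/f(|S(r)|) ≥ w(S)/f(|S|) for every nonempty S ⊆ V; that is, some level set of y* is an optimal solution to f-DS. -/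
variable {V : Type} [Fintype V] [DecidableEq V]

def LPfeas (G : WGraph V) (k : ℕ) (x : Sym2 V → ℝ) (y : V → ℝ) : Prop :=
  (∑ v : V, y v = (k : ℝ)) ∧
  (∀ e ∈ G.E, ∀ v ∈ e, x e ≤ y v) ∧
  (∀ e ∈ G.E, 0 ≤ x e ∧ x e ≤ 1) ∧
  (∀ v : V, 0 ≤ y v ∧ y v ≤ 1)

noncomputable def prevV (P : Finset ℝ) (t : ℝ) : ℝ :=
  (insert (0:ℝ) (P.filter (· < t))).max' (Finset.insert_nonempty _ _)

lemma prevV_lt (P : Finset ℝ) {t : ℝ} (ht : 0 < t) : prevV P t < t := by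
  rw [prevV, Finset.max'_lt_iff]
  intro s hs
  rcases Finset.mem_insert.mp hs with h | h
  · rw [h]; exact ht
  · exact (Finset.mem_filter.mp h).2

lemma prevV_mem (P : Finset ℝ) (t : ℝ) : prevV P t ∈ insert (0:ℝ) P := by
  have := Finset.max'_mem (insert (0:ℝ) (P.filter (· < t))) (Finset.insert_nonempty _ _)
  rcases Finset.mem_insert.mp this with h | h
  · rw [Finset.mem_insert]; exact Or.inl h
  · exact Finset.mem_insert_of_mem (Finset.mem_filter.mp h).1

lemma prevV_ge (P : Finset ℝ) {s t : ℝ} (hs : s ∈ P) (hst : s < t) : s ≤ prevV P t :=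
  Finset.le_max' _ _ (by simp [Finset.mem_filter, hs, hst])

lemma telescope (P : Finset ℝ) (hP : ∀ t ∈ P, 0 < t) (n : ℕ) :
    ∀ a, a ∈ insert (0:ℝ) P → (P.filter (fun t => t ≤ a)).card ≤ n →
    ∑ t ∈ P.filter (fun t => t ≤ a), (t - prevV P t) = a := by
  induction n with
  | zero =>
    intro a ha hcard
    rcases Finset.mem_insert.mp ha with h | h
    · subst h
      rw [Finset.filter_false_of_mem, Finset.sum_empty]
      intro t ht h'
      exact absurd h' (not_le.mpr (hP t ht))
    · exfalso
      have : a ∈ P.filter (fun t => t ≤ a) := Finset.mem_filter.mpr ⟨h, le_refl a⟩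
      have := Finset.card_pos.mpr ⟨a, this⟩
      omega
  | succ n ih =>
    intro a ha hcard
    rcases Finset.mem_insert.mp ha with h | h
    · subst h
      rw [Finset.filter_false_of_mem, Finset.sum_empty]
      intro t ht h'
      exact absurd h' (not_le.mpr (hP t ht))
    · have ha0 : 0 < a := hP a h
      have hprev : prevV P a < a := prevV_lt P ha0
      have hsplit : P.filter (fun t => t ≤ a) = insert a (P.filter (fun t => t ≤ prevV P a)) := by
        ext t
        simp only [Finset.mem_insert, Finset.mem_filter]
        constructor
        · rintro ⟨htP, hta⟩
          rcases eq_or_lt_of_le hta with he | hlt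
          · exact Or.inl he
          · exact Or.inr ⟨htP, prevV_ge P htP hlt⟩
        · rintro (rfl | ⟨htP, htp⟩)
          · exact ⟨h, le_refl _⟩
          · exact ⟨htP, le_of_lt (lt_of_le_of_lt htp hprev)⟩
      have hanotin : a ∉ P.filter (fun t => t ≤ prevV P a) := by
        simp only [Finset.mem_filter, not_and]
        intro _
        linarith
      rw [hsplit, Finset.sum_insert hanotin]
      have hcard' : (P.filter (fun t => t ≤ prevV P a)).card ≤ n := by
        have := Finset.card_insert_of_notMem hanotin
        rw [← hsplit] at this
        omega
      rw [ih (prevV P a) (prevV_mem P a) hcard']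
      ring

lemma supergrad (f : ℕ → ℝ)
    (hconc : ∀ x : ℕ, f x - 2 * f (x + 1) + f (x + 2) ≤ 0) (k : ℕ) :
    ∀ s : ℕ, f s ≤ f k + (f (k+1) - f k) * ((s:ℝ) - k) := by
  set c : ℝ := f (k+1) - f k with hc
  have hd : Antitone (fun i => f (i+1) - f i) := by
    apply antitone_nat_of_succ_le
    intro n
    have := hconc n
    show f (n+1+1) - f (n+1) ≤ f (n+1) - f n
    linarith
  have h1 : ∀ m : ℕ, f (k + m) ≤ f k + c * m := by
    intro m
    induction m with
    | zero => simp
    | succ m ih =>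
      have hle : f (k + m + 1) - f (k + m) ≤ c := hd (Nat.le_add_right k m)
      have : f (k + (m+1)) = f (k + m + 1) := by ring_nf
      rw [this]
      push_cast
      linarith
  have h2 : ∀ m : ℕ, m ≤ k → f (k - m) ≤ f k - c * m := by
    intro m
    induction m with
    | zero => simp
    | succ m ih =>
      intro hm
      have hm' : m ≤ k := by omega
      have heq : k - m - 1 + 1 = k - m := by omega
      have hge : c ≤ f (k - m - 1 + 1) - f (k - m - 1) := hd (by omega)
      have h3 : k - (m+1) = k - m - 1 := by omega
      rw [h3]
      rw [heq] at hge
      have := ih hm'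
      push_cast
      linarith
  intro s
  rcases le_or_gt k s with h | h
  · have h1' := h1 (s - k)
    have he : k + (s - k) = s := by omega
    rw [he] at h1'
    have hcast : ((s - k : ℕ) : ℝ) = (s:ℝ) - k := by push_cast [h]; ring
    rw [hcast] at h1'
    linarith
  · have h2' := h2 (k - s) (by omega)
    have he : k - (k - s) = s := by omega
    rw [he] at h2'
    have hcast : ((k - s : ℕ) : ℝ) = (k:ℝ) - s := by push_cast [le_of_lt h]; ring
    rw [hcast] at h2'
    linarith

theorem stmt16 (G : WGraph V) (hE : G.E.Nonempty)
    (f : ℕ → ℝ) (hmono : Monotone f) (hf0 : f 0 = 0) (hfpos : ∀ x, 1 ≤ x → 0 < f x)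
    (hconc : ∀ x : ℕ, f x - 2 * f (x + 1) + f (x + 2) ≤ 0)
    (Sstar : Finset V) (hne : Sstar.Nonempty)
    (hopt : ∀ S : Finset V, S.Nonempty → G.wS S / f S.card ≤ G.wS Sstar / f Sstar.card)
    (x : Sym2 V → ℝ) (y : V → ℝ) (hfeas : LPfeas G Sstar.card x y)
    (hLPopt : ∀ (x' : Sym2 V → ℝ) (y' : V → ℝ), LPfeas G Sstar.card x' y' →
      ∑ e ∈ G.E, G.w e * x' e ≤ ∑ e ∈ G.E, G.w e * x e) :
    ∃ r : ℝ, 0 < r ∧ r ≤ 1 ∧ (Finset.univ.filter (fun v => r ≤ y v)).Nonempty ∧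
      ∀ S : Finset V, S.Nonempty →
        G.wS S / f S.card ≤
          G.wS (Finset.univ.filter (fun v => r ≤ y v)) /
            f (Finset.univ.filter (fun v => r ≤ y v)).card := by
  obtain ⟨hysum, hxy, hxbd, hybd⟩ := hfeas
  set k := Sstar.card with hk
  have hk1 : 1 ≤ k := Finset.card_pos.mpr hne
  have hfk : 0 < f k := hfpos k hk1
  set Slev : ℝ → Finset V := fun r => Finset.univ.filter (fun v => r ≤ y v) with hSlev
  set P : Finset ℝ := (Finset.univ.image y).filter (fun t => 0 < t) with hP
  have hPpos : ∀ t ∈ P, 0 < t := fun t ht => (Finset.mem_filter.mp ht).2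
  have hyP : ∀ v : V, y v ∈ insert (0:ℝ) P := by
    intro v
    rcases eq_or_lt_of_le (hybd v).1 with h | h
    · rw [Finset.mem_insert]; exact Or.inl h.symm
    · exact Finset.mem_insert_of_mem (Finset.mem_filter.mpr
        ⟨Finset.mem_image_of_mem y (Finset.mem_univ v), h⟩)
  have Tele : ∀ a ∈ insert (0:ℝ) P, ∑ t ∈ P.filter (fun t => t ≤ a), (t - prevV P t) = a :=
    fun a ha => telescope P hPpos (P.filter (fun t => t ≤ a)).card a ha le_rfl
  have hΔpos : ∀ t ∈ P, 0 < t - prevV P t := fun t ht => by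
    have := prevV_lt P (hPpos t ht); linarith
  -- (V) P nonempty
  have hPne : P.Nonempty := by
    by_contra hcon
    rw [Finset.not_nonempty_iff_eq_empty] at hcon
    have : ∀ v : V, y v = 0 := by
      intro v
      have := hyP v
      rw [hcon] at this
      simpa using this
    rw [Finset.sum_congr rfl (fun v _ => this v), Finset.sum_const, smul_zero] at hysum
    have : (0:ℝ) < k := by exact_mod_cast hk1
    linarith
  -- (I)
  have hI : ∑ t ∈ P, (t - prevV P t) * ((Slev t).card : ℝ) = (k : ℝ) := by
    have step : ∀ t : ℝ, ((Slev t).card : ℝ) = ∑ v : V, if t ≤ y v then (1:ℝ) else 0 := by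
      intro t
      rw [Finset.sum_ite, Finset.sum_const, Finset.sum_const, smul_zero, add_zero]
      simp [hSlev]
    calc ∑ t ∈ P, (t - prevV P t) * ((Slev t).card : ℝ)
        = ∑ t ∈ P, ∑ v : V, (if t ≤ y v then (t - prevV P t) else 0) := by
          apply Finset.sum_congr rfl
          intro t _
          rw [step t, Finset.mul_sum]
          apply Finset.sum_congr rfl
          intro v _
          split_ifs <;> ring
      _ = ∑ v : V, ∑ t ∈ P, (if t ≤ y v then (t - prevV P t) else 0) := Finset.sum_comm
      _ = ∑ v : V, y v := by
          apply Finset.sum_congr rfl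
          intro v _
          rw [← Finset.sum_filter]
          exact Tele (y v) (hyP v)
      _ = (k : ℝ) := hysum
  -- sum of deltas ≤ 1
  have hΔ1 : ∑ t ∈ P, (t - prevV P t) ≤ 1 := by
    obtain ⟨M, hM⟩ := Finset.exists_max_image P id hPne
    obtain ⟨hMP, hMmax⟩ := hM
    have hfilt : P.filter (fun t => t ≤ M) = P := by
      apply Finset.filter_true_of_mem
      intro t ht
      exact hMmax t ht
    have := Tele M (Finset.mem_insert_of_mem hMP)
    rw [hfilt] at this
    rw [this]
    obtain ⟨v, _, hv⟩ := Finset.mem_image.mp (Finset.mem_filter.mp hMP).1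
    rw [← hv]
    exact (hybd v).2
  -- edge condition
  have hedge : ∀ e ∈ G.E, ∀ t : ℝ, (e ∈ (Slev t).sym2 ↔ ∀ v ∈ e, t ≤ y v) := by
    intro e _ t
    rw [Finset.mem_sym2_iff]
    constructor
    · intro h v hv
      have := h v hv
      rw [hSlev] at this
      exact (Finset.mem_filter.mp this).2
    · intro h v hv
      exact Finset.mem_filter.mpr ⟨Finset.mem_univ v, h v hv⟩
  -- (II)
  have hII : ∑ e ∈ G.E, G.w e * x e ≤ ∑ t ∈ P, (t - prevV P t) * G.wS (Slev t) := by
    have rhs_eq : ∑ t ∈ P, (t - prevV P t) * G.wS (Slev t)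
        = ∑ e ∈ G.E, G.w e * ∑ t ∈ P.filter (fun t => e ∈ (Slev t).sym2), (t - prevV P t) := by
      calc ∑ t ∈ P, (t - prevV P t) * G.wS (Slev t)
          = ∑ t ∈ P, ∑ e ∈ G.E, (if e ∈ (Slev t).sym2 then (t - prevV P t) * G.w e else 0) := by
            apply Finset.sum_congr rfl
            intro t _
            rw [WGraph.wS, ← Finset.sum_filter, Finset.mul_sum]
        _ = ∑ e ∈ G.E, ∑ t ∈ P, (if e ∈ (Slev t).sym2 then (t - prevV P t) * G.w e else 0) :=
            Finset.sum_comm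
        _ = ∑ e ∈ G.E, G.w e * ∑ t ∈ P.filter (fun t => e ∈ (Slev t).sym2), (t - prevV P t) := by
            apply Finset.sum_congr rfl
            intro e _
            rw [← Finset.sum_filter, Finset.mul_sum]
            apply Finset.sum_congr rfl
            intro t _
            ring
    rw [rhs_eq]
    apply Finset.sum_le_sum
    intro e he
    apply mul_le_mul_of_nonneg_left _ (le_of_lt (G.w_pos e he))
    -- x e ≤ ∑ over filter
    induction e using Sym2.inductionOn with
    | hf u v =>
      have hmem_u : u ∈ s(u, v) := Sym2.mem_mk_left u v
      have hmem_v : v ∈ s(u, v) := Sym2.mem_mk_right u v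
      have hxu := hxy _ he u hmem_u
      have hxv := hxy _ he v hmem_v
      have hfe : P.filter (fun t => s(u,v) ∈ (Slev t).sym2)
          = P.filter (fun t => t ≤ min (y u) (y v)) := by
        apply Finset.filter_congr
        intro t _
        rw [hedge _ he t]
        simp only [le_min_iff, eq_iff_iff]
        constructor
        · intro h
          exact ⟨h u hmem_u, h v hmem_v⟩
        · rintro ⟨h1, h2⟩ w hw
          rcases Sym2.mem_iff.mp hw with rfl | rfl
          · exact h1
          · exact h2
      rw [hfe]
      have hminmem : min (y u) (y v) ∈ insert (0:ℝ) P := by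
        rcases min_cases (y u) (y v) with ⟨h, _⟩ | ⟨h, _⟩ <;> rw [h]
        · exact hyP u
        · exact hyP v
      rw [Tele _ hminmem]
      exact le_min hxu hxv
  -- (III)
  have hIII : ∑ t ∈ P, (t - prevV P t) * f (Slev t).card ≤ f k := by
    set c : ℝ := f (k+1) - f k with hc
    have hc0 : 0 ≤ c := by
      have := hmono (Nat.le_succ k)
      simp only [hc]
      linarith
    have hck : c * k ≤ f k := by
      have h0 := supergrad f hconc k 0
      rw [hf0] at h0
      rw [hc]
      push_cast at h0 ⊢
      nlinarith [h0]
    have hbd : ∑ t ∈ P, (t - prevV P t) * f (Slev t).card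
        ≤ ∑ t ∈ P, (t - prevV P t) * (f k + c * (((Slev t).card : ℝ) - k)) := by
      apply Finset.sum_le_sum
      intro t ht
      exact mul_le_mul_of_nonneg_left (supergrad f hconc k (Slev t).card) (le_of_lt (hΔpos t ht))
    have hexp : ∑ t ∈ P, (t - prevV P t) * (f k + c * (((Slev t).card : ℝ) - k))
        = (f k - c * k) * (∑ t ∈ P, (t - prevV P t)) + c * ∑ t ∈ P, (t - prevV P t) * ((Slev t).card : ℝ) := by
      rw [Finset.mul_sum, Finset.mul_sum, ← Finset.sum_add_distrib]
      apply Finset.sum_congr rfl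
      intro t _
      ring
    rw [hexp, hI] at hbd
    nlinarith [hΔ1, hc0, hck]
  -- (IV) LP value at least wS Sstar
  have hIV : G.wS Sstar ≤ ∑ e ∈ G.E, G.w e * x e := by
    have hfeas' : LPfeas G k (fun e => if e ∈ Sstar.sym2 then 1 else 0)
        (fun v => if v ∈ Sstar then 1 else 0) := by
      refine ⟨?_, ?_, ?_, ?_⟩
      · rw [Finset.sum_ite_mem, Finset.univ_inter, Finset.sum_const, nsmul_eq_mul, mul_one]
      · intro e he v hv
        by_cases h : e ∈ Sstar.sym2
        · simp only [h, if_true]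
          have := (Finset.mem_sym2_iff.mp h) v hv
          simp [this]
        · simp only [h, if_false]
          split_ifs <;> norm_num
      · intro e _
        dsimp only
        constructor <;> split_ifs <;> norm_num
      · intro v
        dsimp only
        constructor <;> split_ifs <;> norm_num
    have := hLPopt _ _ hfeas'
    calc G.wS Sstar = ∑ e ∈ G.E, (if e ∈ Sstar.sym2 then G.w e else 0) := by
          rw [WGraph.wS]; exact Finset.sum_filter _ _
      _ = ∑ e ∈ G.E, G.w e * (if e ∈ Sstar.sym2 then (1:ℝ) else 0) := by
          apply Finset.sum_congr rfl
          intro e _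
          split_ifs <;> ring
      _ ≤ ∑ e ∈ G.E, G.w e * x e := this
  -- pick best level set
  have hSne : ∀ t ∈ P, (Slev t).Nonempty := by
    intro t ht
    obtain ⟨v, _, hv⟩ := Finset.mem_image.mp (Finset.mem_filter.mp ht).1
    exact ⟨v, Finset.mem_filter.mpr ⟨Finset.mem_univ v, le_of_eq hv.symm⟩⟩
  have hwSnn : ∀ S : Finset V, 0 ≤ G.wS S := by
    intro S
    apply Finset.sum_nonneg
    intro e he
    exact le_of_lt (G.w_pos e (Finset.mem_filter.mp he).1)
  obtain ⟨r, hrP, hrmax⟩ := Finset.exists_max_image P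
    (fun t => G.wS (Slev t) / f (Slev t).card) hPne
  set μ : ℝ := G.wS (Slev r) / f (Slev r).card with hμ
  have hfr : 0 < f (Slev r).card := hfpos _ (Finset.card_pos.mpr (hSne r hrP))
  have hμ0 : 0 ≤ μ := div_nonneg (hwSnn _) (le_of_lt hfr)
  have hq : ∀ t ∈ P, G.wS (Slev t) ≤ μ * f (Slev t).card := by
    intro t ht
    have hft : 0 < f (Slev t).card := hfpos _ (Finset.card_pos.mpr (hSne t ht))
    have := hrmax t ht
    calc G.wS (Slev t) = (G.wS (Slev t) / f (Slev t).card) * f (Slev t).card := by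
          field_simp
      _ ≤ μ * f (Slev t).card := mul_le_mul_of_nonneg_right this (le_of_lt hft)
  have hchain : G.wS Sstar ≤ μ * f k := by
    calc G.wS Sstar ≤ ∑ e ∈ G.E, G.w e * x e := hIV
      _ ≤ ∑ t ∈ P, (t - prevV P t) * G.wS (Slev t) := hII
      _ ≤ ∑ t ∈ P, (t - prevV P t) * (μ * f (Slev t).card) := by
          apply Finset.sum_le_sum
          intro t ht
          exact mul_le_mul_of_nonneg_left (hq t ht) (le_of_lt (hΔpos t ht))
      _ = μ * ∑ t ∈ P, (t - prevV P t) * f (Slev t).card := by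
          rw [Finset.mul_sum]
          apply Finset.sum_congr rfl
          intro t _
          ring
      _ ≤ μ * f k := mul_le_mul_of_nonneg_left hIII hμ0
  have hlam : G.wS Sstar / f k ≤ μ := (div_le_iff₀ hfk).mpr hchain
  refine ⟨r, hPpos r hrP, ?_, hSne r hrP, ?_⟩
  · obtain ⟨v, _, hv⟩ := Finset.mem_image.mp (Finset.mem_filter.mp hrP).1
    rw [← hv]
    exact (hybd v).2
  · intro S hS
    calc G.wS S / f S.card ≤ G.wS Sstar / f Sstar.card := hopt S hS
      _ ≤ μ := hlam
end

section
/- Let f be a concave size function, let β ≥ 0, and let (U, A, w_β) be the flow network constructed from G, f, and β. If (X, Y) is a minimum s–t cut of (U, A, w_β) and S = X ∩ V, then the cost of (X, Y) equals w(V) + β·f(|S|) − w(S). Consequently, the minimum s–t cut cost of (U, A, w_β) equals w(V) + min_{S⊆V} ( β·f(|S|) − w(S) ). -/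
variable {V : Type} [Fintype V] [DecidableEq V]

def acoef (f : ℕ → ℝ) (n : ℕ) (k : ℕ) : ℝ :=
  if k = n then f n - f (n - 1) else 2 * f k - f (k + 1) - f (k - 1)

noncomputable def netW (G : WGraph V) (f : ℕ → ℝ) (β : ℝ) :
    ((V ⊕ Fin (Fintype.card V)) ⊕ Bool) → ((V ⊕ Fin (Fintype.card V)) ⊕ Bool) → ℝ
  | .inr true, .inl (.inl v) => G.deg Finset.univ v / 2
  | .inl (.inl u), .inl (.inl v) => if s(u, v) ∈ G.E then G.w s(u, v) / 2 else 0
  | .inl (.inl _), .inl (.inr k) => β * acoef f (Fintype.card V) (k.1 + 1)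
  | .inl (.inr k), .inr false => β * ((k.1 : ℝ) + 1) * acoef f (Fintype.card V) (k.1 + 1)
  | _, _ => 0

noncomputable def cutCost (G : WGraph V) (f : ℕ → ℝ) (β : ℝ)
    (X : Finset ((V ⊕ Fin (Fintype.card V)) ⊕ Bool)) : ℝ :=
  ∑ u ∈ X, ∑ v ∈ Xᶜ, netW G f β u v

/-! ### Auxiliary arithmetic lemmas -/

section arith
variable (f : ℕ → ℝ) (n : ℕ)

lemma acoef_nonneg (hmono : Monotone f)
    (hconc : ∀ x : ℕ, f x - 2 * f (x + 1) + f (x + 2) ≤ 0)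
    {k : ℕ} (h1 : 1 ≤ k) (hk : k ≤ n) : 0 ≤ acoef f n k := by
  unfold acoef
  split
  · have := hmono (Nat.sub_le n 1); linarith
  · obtain ⟨m, rfl⟩ := Nat.exists_eq_add_of_le h1
    have := hconc m
    rw [show 1 + m = m + 1 by omega, show m + 1 + 1 = m + 2 by omega,
        show m + 1 - 1 = m by omega]
    linarith

noncomputable def bfun (f : ℕ → ℝ) (n : ℕ) (k : ℕ) : ℝ :=
  if k ≤ n then f k - f (k - 1) else 0

lemma acoef_eq_sub {k : ℕ} (h1 : 1 ≤ k) (hk : k ≤ n) :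
    acoef f n k = bfun f n k - bfun f n (k + 1) := by
  unfold acoef bfun
  rcases eq_or_lt_of_le hk with rfl | hlt
  · simp
  · rw [if_neg (by omega), if_pos hk, if_pos (by omega)]
    have h3 : k + 1 - 1 = k := by omega
    rw [h3]; ring

lemma tailsum (s : ℕ) (hs : s < n) :
    ∑ k ∈ Finset.Ico s n, acoef f n (k + 1) = f (s + 1) - f s := by
  have : ∀ k ∈ Finset.Ico s n, acoef f n (k+1) = bfun f n (k+1) - bfun f n (k+2) := by
    intro k hk
    simp only [Finset.mem_Ico] at hk
    exact acoef_eq_sub f n (by omega) (by omega)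
  rw [Finset.sum_congr rfl this, Finset.sum_Ico_eq_sum_range]
  have : ∀ i ∈ Finset.range (n - s),
      bfun f n (s + i + 1) - bfun f n (s + i + 2) =
      (fun i => bfun f n (s + i + 1)) i - (fun i => bfun f n (s + i + 1)) (i+1) := by
    intro i _; simp only []; ring_nf
  rw [Finset.sum_congr rfl this, Finset.sum_range_sub']
  have h1 : s + 0 + 1 = s + 1 := by ring
  have h2 : s + (n - s) + 1 = n + 1 := by omega
  rw [h1, h2]
  unfold bfun
  rw [if_pos (by omega), if_neg (by omega)]
  simp

lemma minsum' (s : ℕ) (hs : s ≤ n) (hf0 : f 0 = 0) :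
    ∑ k ∈ Finset.range n, (↑(min (k + 1) s) : ℝ) * acoef f n (k + 1) = f s := by
  induction s with
  | zero => simp [hf0]
  | succ s ih =>
    have hsn : s < n := by omega
    have ihv := ih (by omega)
    have step : ∑ k ∈ Finset.range n, (↑(min (k + 1) (s+1)) : ℝ) * acoef f n (k + 1)
        - ∑ k ∈ Finset.range n, (↑(min (k + 1) s) : ℝ) * acoef f n (k + 1)
        = ∑ k ∈ Finset.Ico s n, acoef f n (k + 1) := by
      rw [← Finset.sum_sub_distrib]
      have : ∀ k ∈ Finset.range n,
          (↑(min (k + 1) (s+1)) : ℝ) * acoef f n (k + 1) - (↑(min (k + 1) s) : ℝ) * acoef f n (k + 1)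
          = if s ≤ k then acoef f n (k+1) else 0 := by
        intro k _
        by_cases h : s ≤ k
        · rw [if_pos h]
          have e1 : min (k+1) (s+1) = s+1 := by omega
          have e2 : min (k+1) s = s := by omega
          rw [e1, e2]; push_cast; ring
        · rw [if_neg h]
          have e1 : min (k+1) (s+1) = k+1 := by omega
          have e2 : min (k+1) s = k+1 := by omega
          rw [e1, e2]; ring
      rw [Finset.sum_congr rfl this, Finset.sum_ite, Finset.sum_const, smul_zero, add_zero]
      congr 1
      ext k
      simp [Finset.mem_Ico, Finset.mem_filter, Finset.mem_range]
      omega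
    rw [tailsum f n s hsn] at step
    linarith
end arith

/-! ### Graph double-counting lemmas -/

lemma key' (w : Sym2 V → ℝ) (E : Finset (Sym2 V)) (hE : ∀ e ∈ E, ¬ e.IsDiag) (A : Finset V) :
    ∑ u ∈ A, ∑ v ∈ A, (if s(u, v) ∈ E then w s(u, v) else 0)
      = 2 * ∑ e ∈ E.filter (fun e => e ∈ A.sym2), w e := by
  induction E using Finset.induction_on with
  | empty => simp
  | @insert e E0 hnot ih =>
    have hdiag := hE e (Finset.mem_insert_self e E0)
    have hE0 : ∀ e ∈ E0, ¬ e.IsDiag := fun e' he' => hE e' (Finset.mem_insert_of_mem he')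
    induction e using Sym2.ind with
    | _ a b =>
    have hab : a ≠ b := by
      intro h; exact hdiag (by simp [h, Sym2.mk_isDiag_iff])
    have split : ∀ u v : V, (if s(u, v) ∈ insert s(a, b) E0 then w s(u, v) else 0)
        = ((if u = a ∧ v = b then w s(a, b) else 0) + (if u = b ∧ v = a then w s(a, b) else 0))
          + (if s(u, v) ∈ E0 then w s(u, v) else 0) := by
      intro u v
      by_cases heq : s(u, v) = s(a, b)
      · have hmem : s(u, v) ∈ insert s(a, b) E0 := by rw [heq]; exact Finset.mem_insert_self _ _
        have hnotE0 : s(u, v) ∉ E0 := by rw [heq]; exact hnot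
        rw [if_pos hmem, if_neg hnotE0]
        rw [Sym2.eq_iff] at heq
        rcases heq with ⟨rfl, rfl⟩ | ⟨rfl, rfl⟩
        · rw [if_pos ⟨rfl, rfl⟩, if_neg (by tauto)]; simp
        · rw [if_neg (by tauto), if_pos ⟨rfl, rfl⟩]; rw [Sym2.eq_swap]; simp
      · have h1 : ¬(u = a ∧ v = b) := by rintro ⟨rfl, rfl⟩; exact heq rfl
        have h2 : ¬(u = b ∧ v = a) := by rintro ⟨rfl, rfl⟩; exact heq (Sym2.eq_swap)
        rw [if_neg h1, if_neg h2]
        simp only [Finset.mem_insert, heq, false_or]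
        ring
    simp only [split, Finset.sum_add_distrib]
    rw [ih hE0]
    have d1 : ∑ u ∈ A, ∑ v ∈ A, (if u = a ∧ v = b then w s(a, b) else 0)
        = if a ∈ A ∧ b ∈ A then w s(a, b) else 0 := by
      simp [Finset.sum_ite_eq', ite_and, Finset.sum_ite_eq]
    have d2 : ∑ u ∈ A, ∑ v ∈ A, (if u = b ∧ v = a then w s(a, b) else 0)
        = if a ∈ A ∧ b ∈ A then w s(a, b) else 0 := by
      simp [Finset.sum_ite_eq', ite_and, Finset.sum_ite_eq, and_comm]
      by_cases ha : a ∈ A <;> by_cases hb : b ∈ A <;> simp [ha, hb]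
    rw [d1, d2, Finset.filter_insert]
    by_cases hmem : s(a, b) ∈ A.sym2
    · rw [if_pos hmem, Finset.sum_insert (by simp [hnot])]
      rw [Finset.mk_mem_sym2_iff] at hmem
      rw [if_pos hmem]; ring
    · rw [if_neg hmem]
      rw [Finset.mk_mem_sym2_iff] at hmem
      rw [if_neg hmem]; ring

noncomputable def crossW (G : WGraph V) (A B : Finset V) : ℝ :=
  ∑ u ∈ A, ∑ v ∈ B, if s(u, v) ∈ G.E then G.w s(u, v) else 0

lemma crossW_symm (G : WGraph V) (A B : Finset V) : crossW G A B = crossW G B A := by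
  unfold crossW
  rw [Finset.sum_comm]
  refine Finset.sum_congr rfl fun v _ => Finset.sum_congr rfl fun u _ => ?_
  rw [Sym2.eq_swap]

lemma crossW_self (G : WGraph V) (A : Finset V) : crossW G A A = 2 * G.wS A :=
  key' G.w G.E G.not_diag A

lemma crossW_split_left (G : WGraph V) (S B : Finset V) :
    crossW G Finset.univ B = crossW G S B + crossW G Sᶜ B := by
  unfold crossW
  rw [← Finset.sum_add_sum_compl S]

lemma crossW_split_right (G : WGraph V) (A S : Finset V) :
    crossW G A Finset.univ = crossW G A S + crossW G A Sᶜ := by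
  unfold crossW
  rw [← Finset.sum_add_distrib]
  refine Finset.sum_congr rfl fun u _ => ?_
  rw [← Finset.sum_add_sum_compl S]

lemma vertex_part (G : WGraph V) (S : Finset V) :
    ∑ v ∈ Sᶜ, G.deg Finset.univ v / 2
      + ∑ u ∈ S, ∑ v ∈ Sᶜ, (if s(u, v) ∈ G.E then G.w s(u, v) / 2 else 0)
      = G.wS Finset.univ - G.wS S := by
  have hdeg : ∑ v ∈ Sᶜ, G.deg Finset.univ v = crossW G Finset.univ Sᶜ := by
    unfold crossW
    rw [Finset.sum_comm]
    refine Finset.sum_congr rfl fun v _ => ?_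
    unfold WGraph.deg
    rw [Finset.sum_filter]
  have hhalf : ∑ u ∈ S, ∑ v ∈ Sᶜ, (if s(u, v) ∈ G.E then G.w s(u, v) / 2 else 0)
      = crossW G S Sᶜ / 2 := by
    unfold crossW
    rw [Finset.sum_div]
    refine Finset.sum_congr rfl fun u _ => ?_
    rw [Finset.sum_div]
    refine Finset.sum_congr rfl fun v _ => ?_
    split_ifs <;> simp
  have h1 : crossW G Finset.univ Finset.univ = 2 * G.wS Finset.univ := crossW_self G _
  have h2 : crossW G S S = 2 * G.wS S := crossW_self G S
  have h3 : crossW G Sᶜ Sᶜ = 2 * G.wS Sᶜ := crossW_self G Sᶜ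
  have h4 := crossW_split_left G S (Finset.univ : Finset V)
  have h5 := crossW_split_right G S S
  have h6 := crossW_split_right G Sᶜ S
  have h7 := crossW_split_left G S Sᶜ
  have h8 := crossW_symm G Sᶜ S
  have hsum : ∑ v ∈ Sᶜ, G.deg Finset.univ v / 2 = crossW G Finset.univ Sᶜ / 2 := by
    rw [← hdeg, Finset.sum_div]
  rw [hsum, hhalf]
  linarith

/-! ### The `phi` function -/

noncomputable def phiF (f : ℕ → ℝ) (n : ℕ) (s : ℕ) (K : Finset (Fin n)) : ℝ :=
  (s : ℝ) * ∑ k ∈ Kᶜ, acoef f n (k.1 + 1) + ∑ k ∈ K, ((k.1 : ℝ) + 1) * acoef f n (k.1 + 1)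

lemma phiF_ge (f : ℕ → ℝ) (n : ℕ) (hf0 : f 0 = 0) (hmono : Monotone f)
    (hconc : ∀ x : ℕ, f x - 2 * f (x + 1) + f (x + 2) ≤ 0)
    (s : ℕ) (hs : s ≤ n) (K : Finset (Fin n)) : f s ≤ phiF f n s K := by
  have base : f s = ∑ k : Fin n, (↑(min (k.1 + 1) s) : ℝ) * acoef f n (k.1 + 1) := by
    rw [Fin.sum_univ_eq_sum_range (fun k => (↑(min (k + 1) s) : ℝ) * acoef f n (k + 1)),
      minsum' f n s hs hf0]
  rw [base, ← Finset.sum_add_sum_compl K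
    (fun k : Fin n => (↑(min (k.1 + 1) s) : ℝ) * acoef f n (k.1 + 1))]
  unfold phiF
  rw [add_comm ((s:ℝ) * _), Finset.mul_sum]
  apply add_le_add
  · refine Finset.sum_le_sum fun k _ => ?_
    have ha : 0 ≤ acoef f n (k.1 + 1) := acoef_nonneg f n hmono hconc (by omega) k.2
    apply mul_le_mul_of_nonneg_right _ ha
    have : (min (k.1 + 1) s) ≤ k.1 + 1 := min_le_left _ _
    calc (↑(min (k.1 + 1) s) : ℝ) ≤ ((k.1 + 1 : ℕ) : ℝ) := by exact_mod_cast this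
      _ = (k.1 : ℝ) + 1 := by push_cast; ring
  · refine Finset.sum_le_sum fun k _ => ?_
    have ha : 0 ≤ acoef f n (k.1 + 1) := acoef_nonneg f n hmono hconc (by omega) k.2
    apply mul_le_mul_of_nonneg_right _ ha
    exact_mod_cast min_le_right (k.1 + 1) s

lemma phiF_opt (f : ℕ → ℝ) (n : ℕ) (hf0 : f 0 = 0)
    (s : ℕ) (hs : s ≤ n) :
    phiF f n s (Finset.univ.filter (fun k : Fin n => k.1 + 1 ≤ s)) = f s := by
  have base : f s = ∑ k : Fin n, (↑(min (k.1 + 1) s) : ℝ) * acoef f n (k.1 + 1) := by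
    rw [Fin.sum_univ_eq_sum_range (fun k => (↑(min (k + 1) s) : ℝ) * acoef f n (k + 1)),
      minsum' f n s hs hf0]
  rw [base, ← Finset.sum_add_sum_compl (Finset.univ.filter (fun k : Fin n => k.1 + 1 ≤ s))
    (fun k : Fin n => (↑(min (k.1 + 1) s) : ℝ) * acoef f n (k.1 + 1))]
  unfold phiF
  rw [add_comm ((s:ℝ) * _), Finset.mul_sum]
  congr 1
  · refine Finset.sum_congr rfl fun k hk => ?_
    simp only [Finset.mem_filter] at hk
    have : min (k.1 + 1) s = k.1 + 1 := by omega
    rw [this]; push_cast; ring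
  · refine Finset.sum_congr rfl fun k hk => ?_
    simp only [Finset.mem_compl, Finset.mem_filter, Finset.mem_univ, true_and, not_le] at hk
    have : min (k.1 + 1) s = s := by omega
    rw [this]

/-! ### Cut decomposition -/

lemma cutCost_decomp (G : WGraph V) (f : ℕ → ℝ) (β : ℝ)
    (X : Finset ((V ⊕ Fin (Fintype.card V)) ⊕ Bool))
    (hs : Sum.inr true ∈ X) (ht : Sum.inr false ∉ X) :
    cutCost G f β X =
      G.wS Finset.univ - G.wS (Finset.univ.filter (fun v : V => Sum.inl (Sum.inl v) ∈ X))
        + β * phiF f (Fintype.card V)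
            (Finset.univ.filter (fun v : V => Sum.inl (Sum.inl v) ∈ X)).card
            (Finset.univ.filter (fun k : Fin (Fintype.card V) => Sum.inl (Sum.inr k) ∈ X)) := by
  set S := Finset.univ.filter (fun v : V => Sum.inl (Sum.inl v) ∈ X) with hS
  set K := Finset.univ.filter (fun k : Fin (Fintype.card V) => Sum.inl (Sum.inr k) ∈ X) with hK
  unfold cutCost
  have h1 : ∀ u, ∑ v ∈ Xᶜ, netW G f β u v
      = ∑ v : ((V ⊕ Fin (Fintype.card V)) ⊕ Bool), if v ∈ X then 0 else netW G f β u v := by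
    intro u
    rw [Finset.sum_ite, Finset.sum_const_zero, zero_add]
    congr 1
    ext v; simp
  have h2 : ∑ u ∈ X, ∑ v ∈ Xᶜ, netW G f β u v
      = ∑ u : ((V ⊕ Fin (Fintype.card V)) ⊕ Bool),
          if u ∈ X then ∑ v ∈ Xᶜ, netW G f β u v else 0 := by
    rw [Finset.sum_ite, Finset.sum_const_zero, add_zero]
    congr 1
    ext u; simp
  rw [h2]
  simp only [h1]
  rw [Fintype.sum_sum_type, Fintype.sum_bool]
  simp only [Fintype.sum_sum_type, Fintype.sum_bool, netW.eq_def, hs, ht, if_true, if_false,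
    ite_self, Finset.sum_const_zero, add_zero, zero_add]
  -- convert indicator sums to filter sums
  have cS : ∀ g : V → ℝ, (∑ v : V, if Sum.inl (Sum.inl v) ∈ X then g v else 0)
      = ∑ v ∈ S, g v := by
    intro g
    rw [hS, Finset.sum_filter]
  have cSc : ∀ g : V → ℝ, (∑ v : V, if Sum.inl (Sum.inl v) ∈ X then 0 else g v)
      = ∑ v ∈ Sᶜ, g v := by
    intro g
    rw [hS, Finset.compl_filter, Finset.sum_filter]
    refine Finset.sum_congr rfl fun v _ => ?_
    rw [ite_not]
  have cK : ∀ g : Fin (Fintype.card V) → ℝ,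
      (∑ k : Fin (Fintype.card V), if Sum.inl (Sum.inr k) ∈ X then g k else 0)
      = ∑ k ∈ K, g k := by
    intro g
    rw [hK, Finset.sum_filter]
  have cKc : ∀ g : Fin (Fintype.card V) → ℝ,
      (∑ k : Fin (Fintype.card V), if Sum.inl (Sum.inr k) ∈ X then 0 else g k)
      = ∑ k ∈ Kᶜ, g k := by
    intro g
    rw [hK, Finset.compl_filter, Finset.sum_filter]
    refine Finset.sum_congr rfl fun k _ => ?_
    rw [ite_not]
  rw [cS, cK, cSc]
  have inner : ∀ u : V,
      ((∑ v : V, if Sum.inl (Sum.inl v) ∈ X then 0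
          else if s(u, v) ∈ G.E then G.w s(u, v) / 2 else 0) +
        ∑ k : Fin (Fintype.card V), if Sum.inl (Sum.inr k) ∈ X then 0
          else β * acoef f (Fintype.card V) (k.1 + 1))
      = (∑ v ∈ Sᶜ, if s(u, v) ∈ G.E then G.w s(u, v) / 2 else 0)
        + ∑ k ∈ Kᶜ, β * acoef f (Fintype.card V) (k.1 + 1) := by
    intro u
    rw [cSc, cKc]
  rw [Finset.sum_congr rfl fun u _ => inner u, Finset.sum_add_distrib, Finset.sum_const]
  have hvp := vertex_part G S
  unfold phiF
  have e1 : ∑ k ∈ Kᶜ, β * acoef f (Fintype.card V) (k.1 + 1)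
      = β * ∑ k ∈ Kᶜ, acoef f (Fintype.card V) (k.1 + 1) := (Finset.mul_sum _ _ _).symm
  have e2 : ∑ k ∈ K, β * ((k.1 : ℝ) + 1) * acoef f (Fintype.card V) (k.1 + 1)
      = β * ∑ k ∈ K, ((k.1 : ℝ) + 1) * acoef f (Fintype.card V) (k.1 + 1) := by
    rw [Finset.mul_sum]; exact Finset.sum_congr rfl fun k _ => by ring
  rw [nsmul_eq_mul, e1, e2]
  linear_combination hvp

/-! ### Canonical cuts -/

def canonCut (T : Finset V) : Finset ((V ⊕ Fin (Fintype.card V)) ⊕ Bool) :=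
  (T.image (fun v => Sum.inl (Sum.inl v)))
    ∪ ((Finset.univ.filter (fun k : Fin (Fintype.card V) => k.1 + 1 ≤ T.card)).image
        (fun k => Sum.inl (Sum.inr k)))
    ∪ {Sum.inr true}

lemma canonCut_src (T : Finset V) : Sum.inr true ∈ canonCut T := by
  simp [canonCut]

lemma canonCut_sink (T : Finset V) : Sum.inr false ∉ canonCut T := by
  simp [canonCut]

lemma canonCut_S (T : Finset V) :
    Finset.univ.filter (fun v : V => Sum.inl (Sum.inl v) ∈ canonCut T) = T := by
  ext v; simp [canonCut]

lemma canonCut_K (T : Finset V) :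
    Finset.univ.filter
        (fun k : Fin (Fintype.card V) => Sum.inl (Sum.inr k) ∈ canonCut T) =
      Finset.univ.filter (fun k : Fin (Fintype.card V) => k.1 + 1 ≤ T.card) := by
  ext k; simp [canonCut]

lemma canonCut_cost (G : WGraph V) (f : ℕ → ℝ) (β : ℝ) (hf0 : f 0 = 0) (T : Finset V) :
    cutCost G f β (canonCut T) = G.wS Finset.univ + β * f T.card - G.wS T := by
  have hcard : T.card ≤ Fintype.card V := by
    simpa [Finset.card_univ] using Finset.card_le_card (Finset.subset_univ T)
  rw [cutCost_decomp G f β (canonCut T) (canonCut_src T) (canonCut_sink T),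
    canonCut_S, canonCut_K, phiF_opt f (Fintype.card V) hf0 T.card hcard]
  ring

/-! ### Main theorem -/

theorem stmt18 (G : WGraph V)
    (f : ℕ → ℝ) (hmono : Monotone f) (hf0 : f 0 = 0)
    (hconc : ∀ x : ℕ, f x - 2 * f (x + 1) + f (x + 2) ≤ 0)
    (β : ℝ) (hβ : 0 ≤ β)
    (X : Finset ((V ⊕ Fin (Fintype.card V)) ⊕ Bool))
    (hsrc : Sum.inr true ∈ X) (hsink : Sum.inr false ∉ X)
    (hmin : ∀ X' : Finset ((V ⊕ Fin (Fintype.card V)) ⊕ Bool),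
      Sum.inr true ∈ X' → Sum.inr false ∉ X' → cutCost G f β X ≤ cutCost G f β X') :
    cutCost G f β X =
      G.wS Finset.univ
        + β * f (Finset.univ.filter (fun v : V => Sum.inl (Sum.inl v) ∈ X)).card
        - G.wS (Finset.univ.filter (fun v : V => Sum.inl (Sum.inl v) ∈ X)) ∧
    ∀ T : Finset V, cutCost G f β X ≤ G.wS Finset.univ + β * f T.card - G.wS T := by
  have hub : ∀ T : Finset V,
      cutCost G f β X ≤ G.wS Finset.univ + β * f T.card - G.wS T := by
    intro T
    have := hmin (canonCut T) (canonCut_src T) (canonCut_sink T)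
    rwa [canonCut_cost G f β hf0 T] at this
  refine ⟨?_, hub⟩
  set S := Finset.univ.filter (fun v : V => Sum.inl (Sum.inl v) ∈ X) with hSdef
  have hcard : S.card ≤ Fintype.card V := by
    simpa [Finset.card_univ] using Finset.card_le_card (Finset.subset_univ S)
  have hlb : G.wS Finset.univ + β * f S.card - G.wS S ≤ cutCost G f β X := by
    rw [cutCost_decomp G f β X hsrc hsink]
    have := phiF_ge f (Fintype.card V) hf0 hmono hconc S.card hcard
      (Finset.univ.filter (fun k : Fin (Fintype.card V) => Sum.inl (Sum.inr k) ∈ X))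
    have hmul := mul_le_mul_of_nonneg_left this hβ
    rw [← hSdef]
    linarith
  exact le_antisymm (hub S) hlb
end
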